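/- arXiv:2112.01679 — 4 statements merged into one kernel-verified Lean document; each statement's English description precedes it below -/
import Mathlib

section
/- Let μ, α be real numbers with μ > −4α. Then the equilibrium (0, 0) of the autonomous planar system x' = y, y' = −α sin x − μ sin(2x)/(7 + cos 2x) is Lyapunov stable: for every r > 0 there exists δ > 0 such that every solution (x, y) : ℝ → ℝ² of the system with x(0)² + y(0)² < δ² satisfies x(τ)² + y(τ)² < r² for all τ ∈ ℝ. -/
open Real

/-- `(x, y)` is a solution of the autonomous charged-pendulum system
`x' = y`, `y' = -α sin x - μ sin 2x / (7 + cos 2x)`. -/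
def IsChargedPendulumSol (μ α : ℝ) (x y : ℝ → ℝ) : Prop :=
  Differentiable ℝ x ∧ Differentiable ℝ y ∧
  (∀ τ, deriv x τ = y τ) ∧
  (∀ τ, deriv y τ = - α * Real.sin (x τ)
      - μ * Real.sin (2 * x τ) / (7 + Real.cos (2 * x τ)))

section
variable (μ α : ℝ)

lemma den_pos' (t : ℝ) : 0 < 7 + Real.cos t := by nlinarith [Real.neg_one_le_cos t]

noncomputable def Wfun (x : ℝ) : ℝ :=
  α * (1 - Real.cos x) - μ / 2 * (Real.log (7 + Real.cos (2 * x)) - Real.log 8)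

noncomputable def Vfun (p : ℝ × ℝ) : ℝ := p.2 ^ 2 / 2 + Wfun μ α p.1

lemma Wfun_zero : Wfun μ α 0 = 0 := by norm_num [Wfun]

lemma hasDerivAt_Wfun (x : ℝ) :
    HasDerivAt (Wfun μ α)
      (Real.sin x * (α + 2 * μ * Real.cos x / (7 + Real.cos (2 * x)))) x := by
  have h2x : HasDerivAt (fun x : ℝ => 2 * x) 2 x := by
    simpa using (hasDerivAt_id x).const_mul 2
  have hc : HasDerivAt (fun x : ℝ => Real.cos (2 * x)) (-Real.sin (2 * x) * 2) x :=
    (Real.hasDerivAt_cos (2 * x)).comp x h2x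
  have hd : HasDerivAt (fun x : ℝ => 7 + Real.cos (2 * x)) (-Real.sin (2 * x) * 2) x :=
    hc.const_add 7
  have hne : 7 + Real.cos (2 * x) ≠ 0 := (den_pos' _).ne'
  have hl : HasDerivAt (fun x : ℝ => Real.log (7 + Real.cos (2 * x)))
      ((7 + Real.cos (2 * x))⁻¹ * (-Real.sin (2 * x) * 2)) x :=
    HasDerivAt.comp (h₂ := Real.log) x (Real.hasDerivAt_log hne) hd
  have hcos : HasDerivAt (fun x : ℝ => α * (1 - Real.cos x)) (α * Real.sin x) x := by
    simpa using ((Real.hasDerivAt_cos x).const_sub 1).const_mul α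
  have := hcos.sub ((hl.sub_const (Real.log 8)).const_mul (μ / 2))
  refine this.congr_deriv ?_
  rw [Real.sin_two_mul]
  field_simp
  ring

lemma Wfun_continuous : Continuous (Wfun μ α) :=
  continuous_iff_continuousAt.mpr fun x => (hasDerivAt_Wfun μ α x).continuousAt

lemma Vfun_continuous : Continuous (Vfun μ α) :=
  ((continuous_snd.pow 2).div_const 2).add ((Wfun_continuous μ α).comp continuous_fst)

noncomputable def Bfun (x : ℝ) : ℝ := α + 2 * μ * Real.cos x / (7 + Real.cos (2 * x))

lemma Bfun_continuous : Continuous (Bfun μ α) := by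
  apply continuous_const.add
  exact (continuous_const.mul Real.continuous_cos).div
    (continuous_const.add (Real.continuous_cos.comp (continuous_const.mul continuous_id)))
    (fun x => (den_pos' _).ne')

lemma exists_x1 (h : μ > -4 * α) :
    ∃ x₁ : ℝ, 0 < x₁ ∧ x₁ ≤ 1 ∧
      ∀ x : ℝ, x ≠ 0 → |x| ≤ x₁ → 0 < Wfun μ α x := by
  have hB0 : 0 < Bfun μ α 0 := by
    simp only [Bfun, Real.cos_zero, mul_zero, mul_one]
    norm_num
    linarith
  have hopen : IsOpen {x : ℝ | 0 < Bfun μ α x} := isOpen_lt continuous_const (Bfun_continuous μ α)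
  obtain ⟨ε, hε, hball⟩ := Metric.isOpen_iff.mp hopen 0 hB0
  refine ⟨min (ε / 2) 1, by positivity, min_le_right _ _, ?_⟩
  have hx₁ε : min (ε / 2) 1 < ε := lt_of_le_of_lt (min_le_left _ _) (by linarith)
  set x₁ := min (ε / 2) 1 with hx₁def
  have hBpos : ∀ x : ℝ, |x| ≤ x₁ → 0 < Bfun μ α x := by
    intro x hx
    exact hball (by simp [Real.dist_eq]; linarith)
  have hx₁1 : x₁ ≤ 1 := min_le_right _ _
  have hπ : (1 : ℝ) < π := by linarith [Real.pi_gt_three]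
  have hmono : StrictMonoOn (Wfun μ α) (Set.Icc 0 x₁) := by
    apply strictMonoOn_of_deriv_pos (convex_Icc 0 x₁) ((Wfun_continuous μ α).continuousOn)
    intro x hx
    rw [interior_Icc, Set.mem_Ioo] at hx
    rw [(hasDerivAt_Wfun μ α x).deriv]
    have hs : 0 < Real.sin x := Real.sin_pos_of_pos_of_lt_pi hx.1 (by linarith [hx.2])
    exact mul_pos hs (hBpos x (by rw [abs_of_pos hx.1]; linarith [hx.2]))
  have hanti : StrictAntiOn (Wfun μ α) (Set.Icc (-x₁) 0) := by
    apply strictAntiOn_of_deriv_neg (convex_Icc (-x₁) 0) ((Wfun_continuous μ α).continuousOn)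
    intro x hx
    rw [interior_Icc, Set.mem_Ioo] at hx
    rw [(hasDerivAt_Wfun μ α x).deriv]
    have hs : Real.sin x < 0 := by
      have := Real.sin_pos_of_pos_of_lt_pi (x := -x) (by linarith [hx.2]) (by linarith [hx.1])
      rw [Real.sin_neg] at this; linarith
    have hB := hBpos x (by rw [abs_of_neg hx.2]; linarith [hx.1])
    exact mul_neg_of_neg_of_pos hs hB
  intro x hx0 hx
  rcases lt_or_gt_of_ne hx0 with hneg | hpos
  · have := hanti (Set.mem_Icc.mpr ⟨by rw [abs_of_neg hneg] at hx; linarith, le_of_lt hneg⟩)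
      (Set.mem_Icc.mpr ⟨by linarith [lt_min (half_pos hε) one_pos], le_refl 0⟩) hneg
    rwa [Wfun_zero] at this
  · have := hmono (Set.mem_Icc.mpr ⟨le_refl 0, by linarith [lt_min (half_pos hε) one_pos]⟩)
      (Set.mem_Icc.mpr ⟨le_of_lt hpos, by rw [abs_of_pos hpos] at hx; linarith⟩) hpos
    rwa [Wfun_zero] at this

end

/-- For `μ > -4α`, the equilibrium `(0,0)` of the charged pendulum with fixed
support point is Lyapunov stable. -/
theorem chargedPendulum_P1_stable (μ α : ℝ) (h : μ > -4 * α) :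
    ∀ r > 0, ∃ δ > 0, ∀ x y : ℝ → ℝ, IsChargedPendulumSol μ α x y →
      x 0 ^ 2 + y 0 ^ 2 < δ ^ 2 → ∀ τ : ℝ, x τ ^ 2 + y τ ^ 2 < r ^ 2 := by
  intro r hr
  obtain ⟨x₁, hx₁, hx₁1, hWpos⟩ := exists_x1 μ α h
  have hWnonneg : ∀ x : ℝ, |x| ≤ x₁ → 0 ≤ Wfun μ α x := by
    intro x hx
    rcases eq_or_ne x 0 with rfl | hne
    · rw [Wfun_zero]
    · exact (hWpos x hne hx).le
  set ρ := min r x₁ with hρdef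
  have hρ : 0 < ρ := lt_min hr hx₁
  have hρx₁ : ρ ≤ x₁ := min_le_right _ _
  have hρr : ρ ≤ r := min_le_left _ _
  -- the sphere
  set S : Set (ℝ × ℝ) := {p | p.1 ^ 2 + p.2 ^ 2 = ρ ^ 2} with hSdef
  have hSclosed : IsClosed S :=
    isClosed_eq (by fun_prop) continuous_const
  have hSbdd : Bornology.IsBounded S := by
    apply (Metric.isBounded_closedBall (x := (0 : ℝ × ℝ)) (r := ρ)).subset
    intro p hp
    simp only [hSdef, Set.mem_setOf_eq] at hp
    simp only [Metric.mem_closedBall, Prod.dist_eq, Real.dist_eq, sub_zero]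
    have h1 : |p.1 - (0 : ℝ × ℝ).1| ≤ ρ := by
      simp only [Prod.fst_zero, sub_zero]
      nlinarith [sq_abs p.1, abs_nonneg p.1, sq_nonneg p.2]
    have h2 : |p.2 - (0 : ℝ × ℝ).2| ≤ ρ := by
      simp only [Prod.snd_zero, sub_zero]
      nlinarith [sq_abs p.2, abs_nonneg p.2, sq_nonneg p.1]
    exact max_le h1 h2
  have hScompact : IsCompact S := Metric.isCompact_of_isClosed_isBounded hSclosed hSbdd
  have hSne : S.Nonempty := ⟨(ρ, 0), by simp [hSdef]⟩
  obtain ⟨p₀, hp₀S, hp₀min⟩ := hScompact.exists_isMinOn hSne (Vfun_continuous μ α).continuousOn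
  set m := Vfun μ α p₀ with hmdef
  have hp₀ : p₀.1 ^ 2 + p₀.2 ^ 2 = ρ ^ 2 := hp₀S
  have hp₀1 : |p₀.1| ≤ x₁ := by
    nlinarith [sq_abs p₀.1, abs_nonneg p₀.1, sq_nonneg p₀.2]
  have hm : 0 < m := by
    rcases eq_or_ne p₀.1 0 with h10 | h10
    · have h2 : p₀.2 ≠ 0 := by
        intro h20
        rw [h10, h20] at hp₀; simp at hp₀; nlinarith
      have : 0 < p₀.2 ^ 2 / 2 := by positivity
      have hW0 : Wfun μ α p₀.1 = 0 := by rw [h10, Wfun_zero]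
      simp only [hmdef, Vfun, hW0]
      linarith
    · have := hWpos p₀.1 h10 hp₀1
      have h2 : 0 ≤ p₀.2 ^ 2 / 2 := by positivity
      simp only [hmdef, Vfun]
      linarith
  -- δ from continuity of V at 0
  have hV0 : Vfun μ α 0 = 0 := by simp [Vfun, Wfun_zero]
  have hUopen : IsOpen {p : ℝ × ℝ | Vfun μ α p < m} :=
    isOpen_lt (Vfun_continuous μ α) continuous_const
  obtain ⟨ε₂, hε₂, hball₂⟩ := Metric.isOpen_iff.mp hUopen 0 (by simp only [Set.mem_setOf_eq, hV0]; exact hm)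
  refine ⟨min ε₂ ρ, lt_min hε₂ hρ, ?_⟩
  intro x y hsol hinit
  set δ := min ε₂ ρ with hδdef
  have hδε : δ ≤ ε₂ := min_le_left _ _
  have hδρ : δ ≤ ρ := min_le_right _ _
  have hδ : 0 < δ := lt_min hε₂ hρ
  obtain ⟨hxd, hyd, hxy, hyde⟩ := hsol
  have hx' : ∀ τ, HasDerivAt x (y τ) τ := fun τ => hxy τ ▸ (hxd τ).hasDerivAt
  have hy' : ∀ τ, HasDerivAt y (- α * Real.sin (x τ)
      - μ * Real.sin (2 * x τ) / (7 + Real.cos (2 * x τ))) τ :=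
    fun τ => hyde τ ▸ (hyd τ).hasDerivAt
  -- energy conservation
  have hE : ∀ τ, HasDerivAt (fun τ => Vfun μ α (x τ, y τ)) 0 τ := by
    intro τ
    have hW : HasDerivAt (fun τ => Wfun μ α (x τ))
        (Real.sin (x τ) * (α + 2 * μ * Real.cos (x τ) / (7 + Real.cos (2 * x τ))) * y τ) τ :=
      (hasDerivAt_Wfun μ α (x τ)).comp τ (hx' τ)
    have hy2 : HasDerivAt (fun τ => y τ ^ 2 / 2)
        ((2 * y τ ^ 1 * (- α * Real.sin (x τ)
        - μ * Real.sin (2 * x τ) / (7 + Real.cos (2 * x τ)))) / 2) τ :=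
      ((hy' τ).pow 2).div_const 2
    have := hy2.add hW
    refine this.congr_deriv ?_
    have h7 : (7 : ℝ) + Real.cos (2 * x τ) ≠ 0 := (den_pos' _).ne'
    rw [Real.sin_two_mul]
    field_simp
    ring
  have hEconst : ∀ τ, Vfun μ α (x τ, y τ) = Vfun μ α (x 0, y 0) :=
    fun τ => is_const_of_deriv_eq_zero (fun t => (hE t).differentiableAt)
      (fun t => (hE t).deriv) τ 0
  -- initial energy below m
  have hinitV : Vfun μ α (x 0, y 0) < m := by
    apply hball₂
    simp only [Metric.mem_ball, Prod.dist_eq, Real.dist_eq, Prod.fst_zero, Prod.snd_zero, sub_zero]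
    have h1 : |x 0| < δ := by nlinarith [sq_abs (x 0), abs_nonneg (x 0), sq_nonneg (y 0)]
    have h2 : |y 0| < δ := by nlinarith [sq_abs (y 0), abs_nonneg (y 0), sq_nonneg (x 0)]
    exact lt_of_lt_of_le (max_lt h1 h2) hδε
  -- trajectory stays inside ρ
  set u : ℝ → ℝ := fun τ => x τ ^ 2 + y τ ^ 2 with hudef
  have hucont : Continuous u := (hxd.continuous.pow 2).add (hyd.continuous.pow 2)
  have hu0 : u 0 < ρ ^ 2 := by
    have : δ ^ 2 ≤ ρ ^ 2 := pow_le_pow_left₀ hδ.le hδρ 2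
    calc u 0 < δ ^ 2 := hinit
    _ ≤ ρ ^ 2 := this
  intro τ
  by_contra hcon
  push_neg at hcon
  have hτρ : ρ ^ 2 ≤ u τ := by
    have h2 : ρ ^ 2 ≤ r ^ 2 := pow_le_pow_left₀ hρ.le hρr 2
    have h3 : u τ = x τ ^ 2 + y τ ^ 2 := rfl
    linarith [hcon]
  have hmem : ρ ^ 2 ∈ Set.uIcc (u 0) (u τ) := Set.mem_uIcc.mpr (Or.inl ⟨hu0.le, hτρ⟩)
  obtain ⟨t, _, hut⟩ := intermediate_value_uIcc hucont.continuousOn hmem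
  have hptS : (x t, y t) ∈ S := by
    simp only [hSdef, Set.mem_setOf_eq]
    exact hut
  have := hp₀min hptS
  simp only [Set.mem_setOf_eq] at this
  rw [hEconst t, ← hmdef] at this
  linarith [hinitV]
end

section
/- Let μ, α be real numbers with μ > 4α. Then the equilibrium (π, 0) of the autonomous planar system x' = y, y' = −α sin x − μ sin(2x)/(7 + cos 2x) is Lyapunov stable: for every r > 0 there exists δ > 0 such that every solution (x, y) : ℝ → ℝ² of the system with (x(0) − π)² + y(0)² < δ² satisfies (x(τ) − π)² + y(τ)² < r² for all τ ∈ ℝ. -/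
open Real

noncomputable def Gfun (μ α : ℝ) : ℝ → ℝ := fun x =>
  -α * Real.cos x - μ/2 * Real.log (7 + Real.cos (2*x)) - (α - μ/2 * Real.log 8)

lemma denom_pos (z : ℝ) : 0 < 7 + Real.cos z := by
  nlinarith [Real.neg_one_le_cos z]

lemma Gfun_hasDerivAt (μ α x : ℝ) :
    HasDerivAt (Gfun μ α)
      (α * Real.sin x + μ * Real.sin (2*x) / (7 + Real.cos (2*x))) x := by
  have h0 : HasDerivAt (fun y : ℝ => 2*y) 2 x := by
    simpa using (hasDerivAt_id x).const_mul (2:ℝ)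
  have h1 : HasDerivAt (fun y : ℝ => Real.cos (2*y)) (-Real.sin (2*x) * 2) x :=
    (Real.hasDerivAt_cos (2*x)).comp x h0
  have h2 : HasDerivAt (fun y : ℝ => 7 + Real.cos (2*y)) (-Real.sin (2*x) * 2) x := by
    simpa using h1.const_add (7:ℝ)
  have h3 : HasDerivAt (fun y : ℝ => Real.log (7 + Real.cos (2*y)))
      ((-Real.sin (2*x) * 2) / (7 + Real.cos (2*x))) x := by
    simpa [div_eq_mul_inv] using h2.log (ne_of_gt (denom_pos (2*x)))
  have h4 : HasDerivAt (fun y : ℝ => -α * Real.cos y) (-α * -Real.sin x) x :=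
    (Real.hasDerivAt_cos x).const_mul (-α)
  have h5 := (h4.sub (h3.const_mul (μ/2))).sub_const (α - μ/2 * Real.log 8)
  refine h5.congr_deriv ?_
  field_simp [ne_of_gt (denom_pos (2*x))]
  ring

lemma energy_const (μ α : ℝ) (x y : ℝ → ℝ) (hs : IsChargedPendulumSol μ α x y) (τ : ℝ) :
    (y τ)^2/2 + Gfun μ α (x τ) = (y 0)^2/2 + Gfun μ α (x 0) := by
  obtain ⟨hx, hy, hx', hy'⟩ := hs
  have hEd : ∀ t : ℝ, HasDerivAt (fun t => (y t)^2/2 + Gfun μ α (x t)) 0 t := by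
    intro t
    have h1 : HasDerivAt y
        (-α * Real.sin (x t) - μ * Real.sin (2 * x t) / (7 + Real.cos (2 * x t))) t := by
      rw [← hy' t]; exact (hy t).hasDerivAt
    have h2 : HasDerivAt x (y t) t := by rw [← hx' t]; exact (hx t).hasDerivAt
    have h3 : HasDerivAt (fun t => (y t)^2/2)
        ((2 * y t ^ 1 * (-α * Real.sin (x t) - μ * Real.sin (2 * x t) / (7 + Real.cos (2 * x t)))) / 2) t :=
      (h1.pow 2).div_const 2
    have h4 : HasDerivAt (fun t => Gfun μ α (x t))
        ((α * Real.sin (x t) + μ * Real.sin (2 * x t) / (7 + Real.cos (2 * x t))) * y t) t :=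
      (Gfun_hasDerivAt μ α (x t)).comp t h2
    have h5 := h3.add h4
    refine h5.congr_deriv ?_
    ring
  have hdiff : Differentiable ℝ (fun t => (y t)^2/2 + Gfun μ α (x t)) :=
    fun t => (hEd t).differentiableAt
  exact is_const_of_deriv_eq_zero hdiff (fun t => (hEd t).deriv) τ 0

lemma neg_log_ge (t : ℝ) (h1 : t < 1) : t ≤ -Real.log (1 - t) := by
  have := Real.log_le_sub_one_of_pos (x := 1 - t) (by linarith)
  linarith

lemma neg_log_le (t : ℝ) (h0 : 0 ≤ t) (h1 : t ≤ 1/2) : -Real.log (1 - t) ≤ t + 2*t^2 := by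
  have hpos : (0:ℝ) < 1 - t := by linarith
  have hez := Real.exp_pos (t + 2*t^2)
  have h3 := Real.add_one_le_exp (t + 2*t^2)
  have key : 1 ≤ (1 - t) * Real.exp (t + 2*t^2) := by nlinarith
  have hmul : Real.exp (-(t + 2*t^2)) * Real.exp (t + 2*t^2) = 1 := by
    have hh : -(t + 2*t^2) + (t + 2*t^2) = 0 := by ring
    rw [← Real.exp_add, hh, Real.exp_zero]
  have h2 : Real.exp (-(t + 2*t^2)) ≤ 1 - t := by nlinarith
  have := (Real.le_log_iff_exp_le hpos).mpr h2
  linarith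

lemma key_lower (μ α : ℝ) (h : μ > 4*α) (s : ℝ) (h0 : 0 ≤ s) (h1 : s ≤ 1)
    (h2 : s ≤ (μ - 4*α)/4 / (2*|μ|+1)) :
    (μ - 4*α)/4 * s ≤ -2*α*s - μ/2 * Real.log (1 - s*(1-s)) := by
  have ht0 : 0 ≤ s*(1-s) := by nlinarith
  have ht4 : s*(1-s) ≤ 1/4 := by nlinarith [sq_nonneg (2*s-1)]
  have hlow := neg_log_ge (s*(1-s)) (by linarith)
  have hup := neg_log_le (s*(1-s)) ht0 (by linarith)
  have hcpos : (0:ℝ) < (μ - 4*α)/4 := by linarith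
  have habs : 0 ≤ |μ| := abs_nonneg μ
  have h3 : (2*|μ|+1) * s ≤ (μ - 4*α)/4 := by
    rw [le_div_iff₀ (by positivity)] at h2
    linarith [h2]
  have hmu : μ/2 * s * (1-s) - |μ| * (s*(1-s))^2 ≤ -(μ/2 * Real.log (1 - s*(1-s))) := by
    rcases le_or_gt 0 μ with hm | hm
    · have hmm : |μ| = μ := abs_of_nonneg hm
      have := mul_le_mul_of_nonneg_left hlow (by linarith : (0:ℝ) ≤ μ/2)
      nlinarith [sq_nonneg (s*(1-s))]
    · have hmm : |μ| = -μ := abs_of_neg hm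
      have := mul_le_mul_of_nonpos_left hup (by linarith : μ/2 ≤ 0)
      nlinarith
  have e1 : |μ| * (s*(1-s))^2 ≤ |μ| * s^2 :=
    mul_le_mul_of_nonneg_left (by nlinarith) habs
  have e2 : μ * s^2 ≤ |μ| * s^2 := mul_le_mul_of_nonneg_right (le_abs_self μ) (sq_nonneg s)
  nlinarith [mul_le_mul_of_nonneg_right h3 h0]

lemma key_upper (μ α : ℝ) (s : ℝ) (h0 : 0 ≤ s) (h1 : s ≤ 1) :
    -2*α*s - μ/2 * Real.log (1 - s*(1-s)) ≤ (2*|α| + |μ|) * s := by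
  have ht0 : 0 ≤ s*(1-s) := by nlinarith
  have ht4 : s*(1-s) ≤ 1/4 := by nlinarith [sq_nonneg (2*s-1)]
  have hts : s*(1-s) ≤ s := by nlinarith
  have hlow := neg_log_ge (s*(1-s)) (by linarith)
  have hup := neg_log_le (s*(1-s)) ht0 (by linarith)
  have ha : -2*α*s ≤ 2 * |α| * s := by
    nlinarith [mul_nonneg (by linarith [neg_abs_le α] : (0:ℝ) ≤ |α| + α) h0]
  have hb : -(μ/2 * Real.log (1 - s*(1-s))) ≤ |μ| * s := by
    rcases le_or_gt 0 μ with hm | hm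
    · have hmm : |μ| = μ := abs_of_nonneg hm
      have := mul_le_mul_of_nonneg_left hup (by linarith : (0:ℝ) ≤ μ/2)
      nlinarith [mul_le_mul_of_nonneg_left hts hm, mul_nonneg hm h0,
        mul_le_mul_of_nonneg_left ht4 (mul_nonneg hm ht0)]
    · have hmm : |μ| = -μ := abs_of_neg hm
      have := mul_le_mul_of_nonpos_left hlow (by linarith : μ/2 ≤ 0)
      nlinarith
  linarith

lemma G_pi_add (μ α u : ℝ) :
    Gfun μ α (Real.pi + u) = -2*α*(Real.sin (u/2))^2
      - μ/2 * Real.log (1 - (Real.sin (u/2))^2 * (1 - (Real.sin (u/2))^2)) := by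
  have hsc : Real.sin (u/2)^2 + Real.cos (u/2)^2 = 1 := Real.sin_sq_add_cos_sq (u/2)
  set s := Real.sin (u/2) with hsdef
  have hs1 : s^2 ≤ 1 := Real.sin_sq_le_one (u/2)
  have hs0 : 0 ≤ s^2 := sq_nonneg s
  have hcu : Real.cos u = 1 - 2*s^2 := by
    have h2 : (2:ℝ)*(u/2) = u := by ring
    rw [← h2, Real.cos_two_mul]
    nlinarith
  have hsinu : Real.sin u = 2*s*Real.cos (u/2) := by
    have h2 : (2:ℝ)*(u/2) = u := by ring
    have := Real.sin_two_mul (u/2)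
    rw [h2] at this
    rw [this, hsdef]
  have hcospi : Real.cos (Real.pi + u) = -Real.cos u := by
    simp [Real.cos_add]
  have h2x : Real.cos (2*(Real.pi + u)) = Real.cos (2*u) := by
    have hh : 2*(Real.pi + u) = 2*u + 2*Real.pi := by ring
    rw [hh, Real.cos_add_two_pi]
  have hcu2 : Real.cos (2*u) = 1 - 2*(Real.sin u)^2 := by
    rw [Real.cos_two_mul]
    nlinarith [Real.sin_sq_add_cos_sq u]
  have hden : 7 + Real.cos (2*(Real.pi + u)) = 8 * (1 - s^2*(1-s^2)) := by
    rw [h2x, hcu2, hsinu]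
    nlinarith [hsc]
  have ht : 1 - s^2*(1-s^2) > 0 := by nlinarith
  unfold Gfun
  rw [hden, hcospi, hcu, Real.log_mul (by norm_num) (ne_of_gt ht)]
  ring

lemma E_upper (μ α : ℝ) (u v : ℝ) :
    v^2/2 + Gfun μ α (Real.pi + u) ≤ (1/2 + (2 * |α| + |μ|)/4) * (u^2 + v^2) := by
  rw [G_pi_add]
  set s := (Real.sin (u/2))^2 with hsdef
  have hs0 : 0 ≤ s := sq_nonneg _
  have hs1 : s ≤ 1 := Real.sin_sq_le_one _
  have hsu : s ≤ u^2/4 := by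
    have := Real.sin_sq_le_sq (x := u/2)
    rw [← hsdef] at this
    nlinarith
  have hk := key_upper μ α s hs0 hs1
  have hco : (0:ℝ) ≤ 2 * |α| + |μ| := by positivity
  nlinarith [mul_le_mul_of_nonneg_left hsu hco, sq_nonneg v, sq_nonneg u,
    mul_nonneg hco (sq_nonneg v)]

lemma E_lower (μ α : ℝ) (h : μ > 4*α) (u v : ℝ) (hu2 : u^2 ≤ Real.pi^2)
    (hus : u^2/4 ≤ (μ - 4*α)/4 / (2 * |μ| + 1)) :
    min (1/2 : ℝ) ((μ - 4*α)/4/10) * (u^2 + v^2) ≤ v^2/2 + Gfun μ α (Real.pi + u) := by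
  rw [G_pi_add]
  set s := (Real.sin (u/2))^2 with hsdef
  have hs0 : 0 ≤ s := sq_nonneg _
  have hs1 : s ≤ 1 := Real.sin_sq_le_one _
  have hsu : s ≤ u^2/4 := by
    have := Real.sin_sq_le_sq (x := u/2)
    rw [← hsdef] at this
    nlinarith
  have hcpos : (0:ℝ) < (μ - 4*α)/4 := by linarith
  have hk := key_lower μ α h s hs0 hs1 (le_trans hsu hus)
  -- Jordan-type lower bound : u^2/10 ≤ s
  have hpi : 0 < Real.pi := Real.pi_pos
  have habsu : |u/2| ≤ Real.pi/2 := by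
    rw [abs_le]
    constructor <;> nlinarith [abs_le.mp (le_refl |u|), sq_abs u, abs_nonneg u]
  have hjordan := Real.mul_abs_le_abs_sin habsu
  have hslow : u^2/Real.pi^2 ≤ s := by
    have h1 : (2/Real.pi * |u/2|)^2 ≤ |Real.sin (u/2)|^2 :=
      pow_le_pow_left₀ (by positivity) hjordan 2
    rw [sq_abs] at h1
    rw [← hsdef] at h1
    calc u^2/Real.pi^2 = (2/Real.pi * |u/2|)^2 := by
          rw [mul_pow, div_pow, sq_abs]; field_simp
      _ ≤ s := h1
  have hpilt : Real.pi^2 < 10 := by nlinarith [Real.pi_lt_d2, Real.pi_pos]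
  have hslow2 : u^2/10 ≤ s := by
    refine le_trans ?_ hslow
    rw [div_le_div_iff₀ (by norm_num) (by positivity)]
    nlinarith [sq_nonneg u]
  have hmin1 : min (1/2 : ℝ) ((μ - 4*α)/4/10) ≤ 1/2 := min_le_left _ _
  have hmin2 : min (1/2 : ℝ) ((μ - 4*α)/4/10) ≤ (μ - 4*α)/4/10 := min_le_right _ _
  have hminpos : 0 < min (1/2 : ℝ) ((μ - 4*α)/4/10) := lt_min (by norm_num) (by positivity)
  nlinarith [mul_le_mul_of_nonneg_left hslow2 (le_of_lt hcpos), sq_nonneg v, sq_nonneg u,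
    mul_le_mul_of_nonneg_right hmin1 (sq_nonneg v),
    mul_le_mul_of_nonneg_right hmin2 (sq_nonneg u)]

set_option maxHeartbeats 1000000 in
/-- For `μ > 4α`, the equilibrium `(π, 0)` of the charged pendulum with fixed
support point is Lyapunov stable. -/
theorem chargedPendulum_P2_stable (μ α : ℝ) (h : μ > 4 * α) :
    ∀ r > 0, ∃ δ > 0, ∀ x y : ℝ → ℝ, IsChargedPendulumSol μ α x y →
      (x 0 - Real.pi) ^ 2 + y 0 ^ 2 < δ ^ 2 →
      ∀ τ : ℝ, (x τ - Real.pi) ^ 2 + y τ ^ 2 < r ^ 2 := by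
  intro r hr
  have h4 : μ > 4*α := h
  set c : ℝ := (μ - 4*α)/4 with hc
  have hcpos : 0 < c := by rw [hc]; linarith
  set s₀ : ℝ := c / (2 * |μ| + 1) with hs₀
  have hs₀pos : 0 < s₀ := by positivity
  set k : ℝ := min (1/2 : ℝ) (c/10) with hk
  have hkpos : 0 < k := lt_min (by norm_num) (by positivity)
  set K : ℝ := 1/2 + (2 * |α| + |μ|)/4 with hK
  have hKpos : 0 < K := by positivity
  set ρ : ℝ := min r (min Real.pi (2 * Real.sqrt s₀)) with hρ
  have hρpos : 0 < ρ :=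
    lt_min hr (lt_min Real.pi_pos (by positivity))
  have hρr : ρ ≤ r := min_le_left _ _
  have hρpi : ρ ≤ Real.pi := le_trans (min_le_right _ _) (min_le_left _ _)
  have hρs : ρ ≤ 2 * Real.sqrt s₀ := le_trans (min_le_right _ _) (min_le_right _ _)
  have hρsq : ρ^2 ≤ 4 * s₀ := by
    have h1 : ρ^2 ≤ (2 * Real.sqrt s₀)^2 := by
      apply pow_le_pow_left₀ (le_of_lt hρpos) hρs
    have h2 : (2 * Real.sqrt s₀)^2 = 4 * s₀ := by
      rw [mul_pow, Real.sq_sqrt (le_of_lt hs₀pos)]; norm_num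
    linarith
  set δ : ℝ := ρ * Real.sqrt (k / (K + k)) with hδ
  have hδpos : 0 < δ := by
    apply mul_pos hρpos
    apply Real.sqrt_pos.mpr
    positivity
  have hδsq : δ^2 = ρ^2 * (k/(K+k)) := by
    rw [hδ, mul_pow, Real.sq_sqrt (by positivity)]
  have hfrac : K * (k/(K+k)) < k := by
    have heq : K * (k/(K+k)) = K*k/(K+k) := by ring
    rw [heq, div_lt_iff₀ (by positivity)]
    nlinarith
  have hKδ : K * δ^2 < k * ρ^2 := by
    rw [hδsq]
    calc K * (ρ^2 * (k/(K+k))) = (K * (k/(K+k))) * ρ^2 := by ring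
      _ < k * ρ^2 := by
          apply mul_lt_mul_of_pos_right hfrac (by positivity)
  have hkK : k ≤ K := by
    have h1 : (0:ℝ) ≤ (2 * |α| + |μ|)/4 := by positivity
    have h2 : k ≤ 1/2 := min_le_left _ _
    rw [hK]; linarith
  have hδρ : δ^2 < ρ^2 := by
    nlinarith [hKδ, mul_le_mul_of_nonneg_right hkK (sq_nonneg ρ)]
  refine ⟨δ, hδpos, ?_⟩
  intro x y hsol hinit τ
  have hx := hsol.1
  have hy := hsol.2.1
  set f : ℝ → ℝ := fun σ => (x σ - Real.pi)^2 + y σ^2 with hf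
  have hfc : Continuous f := by
    apply Continuous.add
    · exact ((hx.continuous.sub continuous_const).pow 2)
    · exact (hy.continuous.pow 2)
  set E : ℝ → ℝ := fun σ => (y σ)^2/2 + Gfun μ α (x σ) with hE
  have hEconst : ∀ σ, E σ = E 0 := fun σ => energy_const μ α x y hsol σ
  -- upper bound on E everywhere
  have hub : ∀ σ, E σ ≤ K * f σ := by
    intro σ
    have := E_upper μ α (x σ - Real.pi) (y σ)
    rw [show Real.pi + (x σ - Real.pi) = x σ by ring] at this
    exact this
  -- lower bound on E when the orbit point is within distance ρ
  have hlb : ∀ σ, (x σ - Real.pi)^2 ≤ ρ^2 → k * f σ ≤ E σ := by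
    intro σ hσ
    have hupi : (x σ - Real.pi)^2 ≤ Real.pi^2 := by
      refine le_trans hσ ?_
      apply pow_le_pow_left₀ (le_of_lt hρpos) hρpi
    have hus : (x σ - Real.pi)^2/4 ≤ s₀ := by nlinarith
    have := E_lower μ α h4 (x σ - Real.pi) (y σ) hupi (by rw [hs₀] at hus; exact hus)
    rw [show Real.pi + (x σ - Real.pi) = x σ by ring] at this
    exact this
  -- the main claim: f stays below ρ^2
  have hmain : f τ < ρ^2 := by
    by_contra hcon
    push_neg at hcon
    have hf0 : f 0 < ρ^2 := lt_trans hinit hδρ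
    have hmem : ρ^2 ∈ Set.uIcc (f 0) (f τ) :=
      Set.mem_uIcc.mpr (Or.inl ⟨le_of_lt hf0, hcon⟩)
    obtain ⟨σ, _, hσ⟩ := intermediate_value_uIcc (hfc.continuousOn) hmem
    have hxσ : (x σ - Real.pi)^2 ≤ ρ^2 := by
      have : y σ^2 ≥ 0 := sq_nonneg _
      have hfσ : (x σ - Real.pi)^2 + y σ^2 = ρ^2 := hσ
      nlinarith
    have h1 : k * ρ^2 ≤ E σ := by
      have := hlb σ hxσ
      rw [show f σ = ρ^2 from hσ] at this
      exact this
    have h2 : E 0 ≤ K * f 0 := hub 0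
    have h3 : K * f 0 < K * δ^2 := by
      apply mul_lt_mul_of_pos_left hinit hKpos
    have h4' : E σ = E 0 := hEconst σ
    linarith
  have hρ2r2 : ρ^2 ≤ r^2 := by
    apply pow_le_pow_left₀ (le_of_lt hρpos) hρr
  calc (x τ - Real.pi)^2 + y τ^2 = f τ := rfl
    _ < ρ^2 := hmain
    _ ≤ r^2 := hρ2r2
end

section
/- (Krein–Gelfand–Lidskii, necessity direction.) Let n ≥ 1 and let σ₁, …, σₙ be real numbers such that σ_k + σ_l = N for some k, l ∈ {1, …, n} and some nonzero integer N. Let D be the 2n × 2n diagonal matrix diag(σ₁, …, σₙ, σ₁, …, σₙ) and let J be the standard 2n × 2n symplectic matrix (J = [[0, Iₙ], [−Iₙ, 0]]). Then for every ε₀ > 0 there exist ε with 0 < ε < ε₀ and a continuous, 2π-periodic, symmetric-matrix-valued function A : ℝ → M_{2n}(ℝ) such that the linear system z'(t) = J (D + ε A(t)) z(t) has a solution that is unbounded on ℝ. -/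
open Real Matrix

namespace KGL

/-- The coupling pattern matrix: entries 1 at positions (k,l) and (l,k). -/
def Smat (n : ℕ) (k l : Fin n) : Matrix (Fin n) (Fin n) ℝ :=
  Matrix.of fun i j => if (i = k ∧ j = l) ∨ (i = l ∧ j = k) then (1 : ℝ) else 0

/-- The resonant periodic perturbation. -/
noncomputable def Amat (n : ℕ) (k l : Fin n) (N : ℤ) (t : ℝ) :
    Matrix (Fin n ⊕ Fin n) (Fin n ⊕ Fin n) ℝ :=
  Matrix.fromBlocks (Real.cos (N * t) • Smat n k l) (-Real.sin (N * t) • Smat n k l)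
    (-Real.sin (N * t) • Smat n k l) (-Real.cos (N * t) • Smat n k l)

noncomputable def Fs (ε a t : ℝ) : ℝ := Real.exp (ε * t) * Real.cos (a * t + π / 4)
noncomputable def Gs (ε b t : ℝ) : ℝ := -(Real.exp (ε * t) * Real.sin (b * t - π / 4))
noncomputable def Ps (ε a t : ℝ) : ℝ := -(Real.exp (ε * t) * Real.sin (a * t + π / 4))
noncomputable def Qs (ε b t : ℝ) : ℝ := -(Real.exp (ε * t) * Real.cos (b * t - π / 4))

noncomputable def Xv (n : ℕ) (k l : Fin n) (ε a b : ℝ) (t : ℝ) : Fin n → ℝ :=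
  fun i => (if i = k then Fs ε a t else 0) + (if i = l then Gs ε b t else 0)

noncomputable def Yv (n : ℕ) (k l : Fin n) (ε a b : ℝ) (t : ℝ) : Fin n → ℝ :=
  fun i => (if i = k then Ps ε a t else 0) + (if i = l then Qs ε b t else 0)

noncomputable def zv (n : ℕ) (k l : Fin n) (ε a b : ℝ) (t : ℝ) : Fin n ⊕ Fin n → ℝ :=
  Sum.elim (Xv n k l ε a b t) (Yv n k l ε a b t)

lemma hasDerivAt_Fs (ε a : ℝ) (t : ℝ) :
    HasDerivAt (Fs ε a) (ε * Fs ε a t + a * Ps ε a t) t := by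
  have h1 : HasDerivAt (fun t : ℝ => ε * t) ε t := by
    simpa using (hasDerivAt_id t).const_mul ε
  have h2 : HasDerivAt (fun t : ℝ => a * t + π / 4) a t := by
    simpa using ((hasDerivAt_id t).const_mul a).add_const (π / 4)
  have he : HasDerivAt (fun t : ℝ => Real.exp (ε * t)) (Real.exp (ε * t) * ε) t :=
    (Real.hasDerivAt_exp (ε * t)).comp t h1
  have hc : HasDerivAt (fun t : ℝ => Real.cos (a * t + π / 4))
      (-Real.sin (a * t + π / 4) * a) t := by
      have := (Real.hasDerivAt_cos (a * t + π / 4)).comp t h2; exact this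
  have := he.mul hc
  refine HasDerivAt.congr_deriv (this) (Eq.symm ?_)
  simp only [Fs, Ps]; ring

lemma hasDerivAt_Ps (ε a : ℝ) (t : ℝ) :
    HasDerivAt (Ps ε a) (ε * Ps ε a t - a * Fs ε a t) t := by
  have h1 : HasDerivAt (fun t : ℝ => ε * t) ε t := by
    simpa using (hasDerivAt_id t).const_mul ε
  have h2 : HasDerivAt (fun t : ℝ => a * t + π / 4) a t := by
    simpa using ((hasDerivAt_id t).const_mul a).add_const (π / 4)
  have he : HasDerivAt (fun t : ℝ => Real.exp (ε * t)) (Real.exp (ε * t) * ε) t :=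
    (Real.hasDerivAt_exp (ε * t)).comp t h1
  have hs : HasDerivAt (fun t : ℝ => Real.sin (a * t + π / 4))
      (Real.cos (a * t + π / 4) * a) t := by
      have := (Real.hasDerivAt_sin (a * t + π / 4)).comp t h2; exact this
  have := (he.mul hs).neg
  refine HasDerivAt.congr_deriv (this) (Eq.symm ?_)
  simp only [Fs, Ps]; ring

lemma hasDerivAt_Gs (ε b : ℝ) (t : ℝ) :
    HasDerivAt (Gs ε b) (ε * Gs ε b t + b * Qs ε b t) t := by
  have h1 : HasDerivAt (fun t : ℝ => ε * t) ε t := by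
    simpa using (hasDerivAt_id t).const_mul ε
  have h2 : HasDerivAt (fun t : ℝ => b * t - π / 4) b t := by
    simpa using ((hasDerivAt_id t).const_mul b).sub_const (π / 4)
  have he : HasDerivAt (fun t : ℝ => Real.exp (ε * t)) (Real.exp (ε * t) * ε) t :=
    (Real.hasDerivAt_exp (ε * t)).comp t h1
  have hs : HasDerivAt (fun t : ℝ => Real.sin (b * t - π / 4))
      (Real.cos (b * t - π / 4) * b) t := by
      have := (Real.hasDerivAt_sin (b * t - π / 4)).comp t h2; exact this
  have := (he.mul hs).neg
  refine HasDerivAt.congr_deriv (this) (Eq.symm ?_)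
  simp only [Gs, Qs]; ring

lemma hasDerivAt_Qs (ε b : ℝ) (t : ℝ) :
    HasDerivAt (Qs ε b) (ε * Qs ε b t - b * Gs ε b t) t := by
  have h1 : HasDerivAt (fun t : ℝ => ε * t) ε t := by
    simpa using (hasDerivAt_id t).const_mul ε
  have h2 : HasDerivAt (fun t : ℝ => b * t - π / 4) b t := by
    simpa using ((hasDerivAt_id t).const_mul b).sub_const (π / 4)
  have he : HasDerivAt (fun t : ℝ => Real.exp (ε * t)) (Real.exp (ε * t) * ε) t :=
    (Real.hasDerivAt_exp (ε * t)).comp t h1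
  have hc : HasDerivAt (fun t : ℝ => Real.cos (b * t - π / 4))
      (-Real.sin (b * t - π / 4) * b) t := by
      have := (Real.hasDerivAt_cos (b * t - π / 4)).comp t h2; exact this
  have := (he.mul hc).neg
  refine HasDerivAt.congr_deriv (this) (Eq.symm ?_)
  simp only [Gs, Qs]; ring

lemma Smat_mulVec (n : ℕ) (k l : Fin n) (v : Fin n → ℝ) :
    Smat n k l *ᵥ v = fun i => if i = k then v l else if i = l then v k else 0 := by
  funext i
  simp only [Smat, Matrix.mulVec, dotProduct, Matrix.of_apply, ite_mul, one_mul, zero_mul]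
  by_cases hik : i = k <;> by_cases hil : i = l
  · have hkl : k = l := hik.symm.trans hil
    simp [hik, hkl]
  · have hkl : ¬ k = l := fun h => hil (hik.trans h)
    simp [hik, hkl]
  · have hlk : ¬ l = k := fun h => hik (hil.trans h)
    simp [hik, hil, hlk]
  · simp [hik, hil]

lemma trig1 (a b Nr t : ℝ) (h : a + b = Nr) :
    Real.cos (Nr * t) * Real.cos (b * t - π / 4) + Real.sin (Nr * t) * Real.sin (b * t - π / 4)
      = Real.cos (a * t + π / 4) := by
  rw [← Real.cos_sub]
  congr 1
  rw [← h]; ring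

lemma trig2 (a b Nr t : ℝ) (h : a + b = Nr) :
    Real.sin (Nr * t) * Real.cos (a * t + π / 4) - Real.cos (Nr * t) * Real.sin (a * t + π / 4)
      = Real.sin (b * t - π / 4) := by
  rw [← Real.sin_sub]
  congr 1
  rw [← h]; ring

lemma trig3 (a b Nr t : ℝ) (h : a + b = Nr) :
    Real.cos (Nr * t) * Real.sin (b * t - π / 4) - Real.sin (Nr * t) * Real.cos (b * t - π / 4)
      = -Real.sin (a * t + π / 4) := by
  have h1 : Real.sin (Nr * t - (b * t - π / 4)) = Real.sin (a * t + π / 4) := by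
    congr 1; rw [← h]; ring
  rw [Real.sin_sub] at h1
  linarith

lemma trig4 (a b Nr t : ℝ) (h : a + b = Nr) :
    Real.cos (Nr * t) * Real.cos (a * t + π / 4) + Real.sin (Nr * t) * Real.sin (a * t + π / 4)
      = Real.cos (b * t - π / 4) := by
  rw [← Real.cos_sub]
  congr 1
  rw [← h]; ring

lemma sin_sub_pi_div_four (x : ℝ) : Real.sin (x - π / 4) = -Real.cos (x + π / 4) := by
  rw [Real.sin_sub, Real.cos_add, Real.sin_pi_div_four, Real.cos_pi_div_four]
  ring

lemma cos_sub_pi_div_four (x : ℝ) : Real.cos (x - π / 4) = Real.sin (x + π / 4) := by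
  rw [Real.cos_sub, Real.sin_add, Real.sin_pi_div_four, Real.cos_pi_div_four]
  ring

lemma trig5 (a Nr t : ℝ) (h : a + a = Nr) :
    Real.cos (Nr * t) * Real.sin (a * t + π / 4) - Real.sin (Nr * t) * Real.cos (a * t + π / 4)
      = Real.cos (a * t + π / 4) := by
  have h1 : Real.sin (Nr * t - (a * t + π / 4)) = Real.sin (a * t - π / 4) := by
    congr 1; rw [← h]; ring
  rw [Real.sin_sub, sin_sub_pi_div_four] at h1
  linarith

lemma trig6 (a Nr t : ℝ) (h : a + a = Nr) :
    Real.cos (Nr * t) * Real.cos (a * t + π / 4) + Real.sin (Nr * t) * Real.sin (a * t + π / 4)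
      = Real.sin (a * t + π / 4) := by
  have h1 : Real.cos (Nr * t - (a * t + π / 4)) = Real.cos (a * t - π / 4) := by
    congr 1; rw [← h]; ring
  rw [Real.cos_sub, cos_sub_pi_div_four] at h1
  linarith

lemma mulVec_eq (n : ℕ) (σ : Fin n → ℝ) (k l : Fin n) (N : ℤ) (ε a b t : ℝ) :
    ((Matrix.fromBlocks (0 : Matrix (Fin n) (Fin n) ℝ) 1 (-1) 0) *
        (Matrix.diagonal (Sum.elim σ σ) + ε • Amat n k l N t)) *ᵥ
      zv n k l ε a b t
    = Sum.elim
        (fun i => σ i * Yv n k l ε a b t i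
          + ε * (-Real.sin (N * t) *
              (if i = k then Xv n k l ε a b t l else if i = l then Xv n k l ε a b t k else 0)
            + -Real.cos (N * t) *
              (if i = k then Yv n k l ε a b t l else if i = l then Yv n k l ε a b t k else 0)))
        (fun i => -(σ i * Xv n k l ε a b t i
          + ε * (Real.cos (N * t) *
              (if i = k then Xv n k l ε a b t l else if i = l then Xv n k l ε a b t k else 0)
            + -Real.sin (N * t) *
              (if i = k then Yv n k l ε a b t l else if i = l then Yv n k l ε a b t k else 0)))) := by
  rw [← Matrix.mulVec_mulVec, Matrix.add_mulVec, Matrix.smul_mulVec]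
  have hA : Amat n k l N t *ᵥ zv n k l ε a b t
      = Sum.elim
          (fun i => Real.cos (N * t) *
              (if i = k then Xv n k l ε a b t l else if i = l then Xv n k l ε a b t k else 0)
            + -Real.sin (N * t) *
              (if i = k then Yv n k l ε a b t l else if i = l then Yv n k l ε a b t k else 0))
          (fun i => -Real.sin (N * t) *
              (if i = k then Xv n k l ε a b t l else if i = l then Xv n k l ε a b t k else 0)
            + -Real.cos (N * t) *
              (if i = k then Yv n k l ε a b t l else if i = l then Yv n k l ε a b t k else 0)) := by
    show (Matrix.fromBlocks _ _ _ _) *ᵥ Sum.elim (Xv n k l ε a b t) (Yv n k l ε a b t) = _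
    rw [Matrix.fromBlocks_mulVec]
    funext j
    rcases j with i | i <;>
      simp [Matrix.smul_mulVec, Smat_mulVec, Sum.elim_comp_inl, Sum.elim_comp_inr,
        Matrix.neg_mulVec, Pi.neg_apply, Pi.add_apply, Pi.smul_apply, smul_eq_mul] <;>
      split_ifs <;> ring
  rw [hA]
  rw [Matrix.fromBlocks_mulVec]
  funext j
  rcases j with i | i <;>
    simp [zv, Matrix.mulVec_diagonal, Function.comp, Matrix.zero_mulVec, Matrix.one_mulVec,
      Matrix.neg_mulVec, Pi.add_apply, Pi.smul_apply, smul_eq_mul] <;> ring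

lemma zv_hasDerivAt (n : ℕ) (σ : Fin n → ℝ) (k l : Fin n) (N : ℤ)
    (hab : σ k + σ l = (N : ℝ)) (ε t : ℝ) :
    HasDerivAt (zv n k l ε (σ k) (σ l))
      (((Matrix.fromBlocks (0 : Matrix (Fin n) (Fin n) ℝ) 1 (-1) 0) *
          (Matrix.diagonal (Sum.elim σ σ) + ε • Amat n k l N t)) *ᵥ
        zv n k l ε (σ k) (σ l) t) t := by
  rw [mulVec_eq]
  apply hasDerivAt_pi.mpr
  intro j
  rcases j with i | i
  · -- X components
    simp only [Sum.elim_inl]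
    show HasDerivAt (fun t => Xv n (k := k) l ε (σ k) (σ l) t i) _ t
    by_cases hik : i = k <;> by_cases hil : i = l
    · -- i = k = l
      subst hik
      have hkl : i = l := hil
      subst hkl
      have haa : σ i + σ i = (N : ℝ) := hab
      have h5 := trig5 (σ i) (N : ℝ) t haa
      have h := (hasDerivAt_Fs ε (σ i) t).add (hasDerivAt_Gs ε (σ i) t)
      simp only [Xv, Yv, eq_self_iff_true, if_true]
      refine HasDerivAt.congr_deriv (h) (Eq.symm ?_)
      simp only [Fs, Gs, Ps, Qs, sin_sub_pi_div_four, cos_sub_pi_div_four]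
      linear_combination (2 * ε * Real.exp (ε * t)) * h5
    · -- i = k, k ≠ l
      subst hik
      have hkl : ¬ (l = i) := fun h => hil h.symm
      have h1 := trig1 (σ i) (σ l) (N : ℝ) t hab
      have h := (hasDerivAt_Fs ε (σ i) t).add_const 0
      simp only [Xv, Yv, eq_self_iff_true, if_true, if_neg hil, if_neg hkl]
      refine HasDerivAt.congr_deriv (h) (Eq.symm ?_)
      simp only [Fs, Gs, Ps, Qs]
      linear_combination (ε * Real.exp (ε * t)) * h1
    · -- i = l, l ≠ k
      subst hil
      have hlk : ¬ (k = i) := fun h => hik h.symm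
      have h2 := trig2 (σ k) (σ i) (N : ℝ) t hab
      have h := (hasDerivAt_Gs ε (σ i) t).const_add 0
      simp only [Xv, Yv, eq_self_iff_true, if_true, if_neg hik, if_neg hlk]
      refine HasDerivAt.congr_deriv (h) (Eq.symm ?_)
      simp only [Fs, Gs, Ps, Qs]
      linear_combination (-(ε * Real.exp (ε * t))) * h2
    · simp only [Xv, Yv, if_neg hik, if_neg hil, add_zero]
      refine HasDerivAt.congr_deriv (hasDerivAt_const t (0 : ℝ)) (Eq.symm ?_)
      ring
  · -- Y components
    simp only [Sum.elim_inr]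
    show HasDerivAt (fun t => Yv n (k := k) l ε (σ k) (σ l) t i) _ t
    by_cases hik : i = k <;> by_cases hil : i = l
    · -- i = k = l
      subst hik
      have hkl : i = l := hil
      subst hkl
      have haa : σ i + σ i = (N : ℝ) := hab
      have h6 := trig6 (σ i) (N : ℝ) t haa
      have h := (hasDerivAt_Ps ε (σ i) t).add (hasDerivAt_Qs ε (σ i) t)
      simp only [Xv, Yv, eq_self_iff_true, if_true]
      refine HasDerivAt.congr_deriv (h) (Eq.symm ?_)
      simp only [Fs, Gs, Ps, Qs, sin_sub_pi_div_four, cos_sub_pi_div_four]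
      linear_combination (-(2 * ε * Real.exp (ε * t))) * h6
    · -- i = k, k ≠ l
      subst hik
      have hkl : ¬ (l = i) := fun h => hil h.symm
      have h3 := trig3 (σ i) (σ l) (N : ℝ) t hab
      have h := (hasDerivAt_Ps ε (σ i) t).add_const 0
      simp only [Xv, Yv, eq_self_iff_true, if_true, if_neg hil, if_neg hkl]
      refine HasDerivAt.congr_deriv (h) (Eq.symm ?_)
      simp only [Fs, Gs, Ps, Qs]
      linear_combination (ε * Real.exp (ε * t)) * h3
    · -- i = l, l ≠ k
      subst hil
      have hlk : ¬ (k = i) := fun h => hik h.symm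
      have h4 := trig4 (σ k) (σ i) (N : ℝ) t hab
      have h := (hasDerivAt_Qs ε (σ i) t).const_add 0
      simp only [Xv, Yv, eq_self_iff_true, if_true, if_neg hik, if_neg hlk]
      refine HasDerivAt.congr_deriv (h) (Eq.symm ?_)
      simp only [Fs, Gs, Ps, Qs]
      linear_combination (-(ε * Real.exp (ε * t))) * h4
    · simp only [Xv, Yv, if_neg hik, if_neg hil, add_zero]
      refine HasDerivAt.congr_deriv (hasDerivAt_const t (0 : ℝ)) (Eq.symm ?_)
      ring

lemma Amat_continuous (n : ℕ) (k l : Fin n) (N : ℤ) : Continuous (Amat n k l N) := by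
  have hc : Continuous fun t : ℝ => Real.cos ((N : ℝ) * t) :=
    Real.continuous_cos.comp (continuous_const.mul continuous_id)
  have hs : Continuous fun t : ℝ => Real.sin ((N : ℝ) * t) :=
    Real.continuous_sin.comp (continuous_const.mul continuous_id)
  apply continuous_matrix
  intro i j
  rcases i with i | i <;> rcases j with j | j <;>
    simp only [Amat, Matrix.fromBlocks_apply₁₁, Matrix.fromBlocks_apply₁₂,
      Matrix.fromBlocks_apply₂₁, Matrix.fromBlocks_apply₂₂, Matrix.smul_apply, smul_eq_mul,
      Pi.neg_apply, neg_mul]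
  · exact hc.mul continuous_const
  · exact (hs.mul continuous_const).neg
  · exact (hs.mul continuous_const).neg
  · exact (hc.mul continuous_const).neg

lemma Smat_transpose (n : ℕ) (k l : Fin n) : (Smat n k l)ᵀ = Smat n k l := by
  ext i j
  simp only [Matrix.transpose_apply, Smat, Matrix.of_apply]
  exact if_congr (by tauto) rfl rfl

lemma Amat_isSymm (n : ℕ) (k l : Fin n) (N : ℤ) (t : ℝ) : (Amat n k l N t).IsSymm := by
  show _ᵀ = _
  simp only [Amat, Matrix.fromBlocks_transpose, Matrix.transpose_smul, Smat_transpose]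

lemma Amat_periodic (n : ℕ) (k l : Fin n) (N : ℤ) (t : ℝ) :
    Amat n k l N (t + 2 * π) = Amat n k l N t := by
  have h1 : Real.cos ((N : ℝ) * (t + 2 * π)) = Real.cos ((N : ℝ) * t) := by
    rw [mul_add, mul_comm (N : ℝ) (2 * π), show (N : ℝ) * t + 2 * π * (N : ℝ)
      = (N : ℝ) * t + (N : ℤ) * (2 * π) by push_cast; ring, Real.cos_add_int_mul_two_pi]
  have h2 : Real.sin ((N : ℝ) * (t + 2 * π)) = Real.sin ((N : ℝ) * t) := by
    rw [mul_add, mul_comm (N : ℝ) (2 * π), show (N : ℝ) * t + 2 * π * (N : ℝ)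
      = (N : ℝ) * t + (N : ℤ) * (2 * π) by push_cast; ring, Real.sin_add_int_mul_two_pi]
  simp only [Amat, h1, h2]

end KGL

open KGL in
/-- Krein–Gelfand–Lidskii theorem, necessity direction: if some sum `σ_k + σ_l` equals a
nonzero integer `N`, then for arbitrarily small `ε > 0` there is a continuous, symmetric,
`2π`-periodic matrix perturbation `A(t)` such that the linear Hamiltonian system
`z' = J (D + ε A(t)) z` has a solution unbounded on `ℝ`, where
`D = diag(σ₁, …, σₙ, σ₁, …, σₙ)` and `J` is the standard symplectic matrix. -/
theorem krein_gelfand_lidskii_instability (n : ℕ) (hn : 1 ≤ n) (σ : Fin n → ℝ)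
    (hres : ∃ k l : Fin n, ∃ N : ℤ, N ≠ 0 ∧ σ k + σ l = (N : ℝ)) :
    ∀ ε₀ > (0 : ℝ), ∃ ε : ℝ, 0 < ε ∧ ε < ε₀ ∧
      ∃ A : ℝ → Matrix (Fin n ⊕ Fin n) (Fin n ⊕ Fin n) ℝ,
        Continuous A ∧
        (∀ t, (A t).IsSymm) ∧
        (∀ t, A (t + 2 * Real.pi) = A t) ∧
        ∃ z : ℝ → (Fin n ⊕ Fin n → ℝ),
          (∀ t, HasDerivAt z
            (((Matrix.fromBlocks (0 : Matrix (Fin n) (Fin n) ℝ) 1 (-1) 0) *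
              (Matrix.diagonal (Sum.elim σ σ) + ε • A t)).mulVec (z t)) t) ∧
          ¬ ∃ M : ℝ, ∀ t, ‖z t‖ ≤ M := by
  obtain ⟨k, l, N, hN0, hab⟩ := hres
  intro ε₀ hε₀
  refine ⟨ε₀ / 2, by linarith, by linarith, Amat n k l N, Amat_continuous n k l N,
    fun t => Amat_isSymm n k l N t, fun t => Amat_periodic n k l N t,
    zv n k l (ε₀ / 2) (σ k) (σ l),
    fun t => zv_hasDerivAt n σ k l N hab (ε₀ / 2) t, ?_⟩
  set ε : ℝ := ε₀ / 2 with hε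
  have hεpos : 0 < ε := by positivity
  rintro ⟨M, hM⟩
  have key : ∀ t, Real.exp (ε * t) ^ 2 ≤ 2 * M ^ 2 := by
    intro t
    have h1 : |zv n k l ε (σ k) (σ l) t (Sum.inl k)| ≤ M := by
      have := norm_le_pi_norm (zv n k l ε (σ k) (σ l) t) (Sum.inl k)
      rw [Real.norm_eq_abs] at this
      exact this.trans (hM t)
    have h2 : |zv n k l ε (σ k) (σ l) t (Sum.inr k)| ≤ M := by
      have := norm_le_pi_norm (zv n k l ε (σ k) (σ l) t) (Sum.inr k)
      rw [Real.norm_eq_abs] at this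
      exact this.trans (hM t)
    have hsq : Real.exp (ε * t) ^ 2 ≤
        (zv n k l ε (σ k) (σ l) t (Sum.inl k)) ^ 2 +
        (zv n k l ε (σ k) (σ l) t (Sum.inr k)) ^ 2 := by
      by_cases hkl : k = l
      · subst hkl
        simp only [zv, Sum.elim_inl, Sum.elim_inr, Xv, Yv, eq_self_iff_true, if_true]
        simp only [Fs, Gs, Ps, Qs, sin_sub_pi_div_four, cos_sub_pi_div_four]
        nlinarith [Real.sin_sq_add_cos_sq (σ k * t + π / 4), Real.exp_pos (ε * t),
          sq_nonneg (Real.exp (ε * t))]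
      · have hlk : ¬ (k = l) := hkl
        simp only [zv, Sum.elim_inl, Sum.elim_inr, Xv, Yv, eq_self_iff_true, if_true, if_neg hlk, add_zero]
        simp only [Fs, Ps]
        nlinarith [Real.sin_sq_add_cos_sq (σ k * t + π / 4), sq_nonneg (Real.exp (ε * t))]
    nlinarith [sq_abs (zv n k l ε (σ k) (σ l) t (Sum.inl k)),
      sq_abs (zv n k l ε (σ k) (σ l) t (Sum.inr k)),
      abs_nonneg (zv n k l ε (σ k) (σ l) t (Sum.inl k)),
      abs_nonneg (zv n k l ε (σ k) (σ l) t (Sum.inr k))]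
  have hfin := key (2 * M ^ 2 / ε)
  have hx : ε * (2 * M ^ 2 / ε) = 2 * M ^ 2 := by field_simp
  have hexp := Real.add_one_le_exp (ε * (2 * M ^ 2 / ε))
  rw [hx] at hfin hexp
  nlinarith [Real.exp_pos (2 * M ^ 2 : ℝ), sq_nonneg (M ^ 2)]
end

section
/- Let μ, α be real numbers with α + μ/4 > 0, and set ω = √(α + μ/4). If 2ω is not a positive integer, then there exists ε₀ > 0 such that for every ε with |ε| < ε₀, every twice-differentiable solution ξ : ℝ → ℝ of the Hill equation ξ''(τ) + (α + μ/4 + ε cos τ) ξ(τ) = 0 is bounded on ℝ. -/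
open Set Real
open scoped NNReal
set_option maxHeartbeats 1000000

section Existence

variable {E : Type*} [NormedAddCommGroup E] [NormedSpace ℝ E]

lemma hasDerivWithinAt_singleton' (f : ℝ → E) (d : E) (x : ℝ) :
    HasDerivWithinAt f d {x} x := by
  simp only [HasDerivWithinAt, nhdsWithin_singleton]
  rw [hasDerivAtFilter_iff_isLittleO]
  simp [Asymptotics.isLittleO_pure]

lemma glue_sol {V : ℝ → E → E} {f g : ℝ → E} {a b c : ℝ} (hab : a ≤ b) (hbc : b ≤ c)
    (hf : ∀ t ∈ Icc a b, HasDerivWithinAt f (V t (f t)) (Icc a b) t)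
    (hg : ∀ t ∈ Icc b c, HasDerivWithinAt g (V t (g t)) (Icc b c) t)
    (hfg : f b = g b) :
    ∃ F : ℝ → E, (∀ t ∈ Icc a b, F t = f t) ∧
      ∀ t ∈ Icc a c, HasDerivWithinAt F (V t (F t)) (Icc a c) t := by
  set F : ℝ → E := fun s => if s ≤ b then f s else g s with hFdef
  have hFf : ∀ s ∈ Icc a b, F s = f s := fun s hs => if_pos hs.2
  have hFg : ∀ s ∈ Icc b c, F s = g s := by
    intro s hs
    by_cases hsb : s ≤ b
    · have hsb' : s = b := le_antisymm hsb hs.1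
      simp [F, hsb', hfg]
    · simp [F, hsb]
  refine ⟨F, hFf, ?_⟩
  intro t ht
  rcases lt_trichotomy t b with hlt | heq | hgt
  · have htm : t ∈ Icc a b := ⟨ht.1, hlt.le⟩
    have h1 : HasDerivWithinAt F (V t (F t)) (Icc a b) t := by
      rw [hFf t htm]
      exact (hf t htm).congr hFf (hFf t htm)
    refine h1.mono_of_mem_nhdsWithin ?_
    rw [mem_nhdsWithin]
    exact ⟨Iio b, isOpen_Iio, hlt, fun s hs => ⟨hs.2.1, hs.1.le⟩⟩
  · subst heq
    have htm1 : t ∈ Icc a t := ⟨ht.1, le_rfl⟩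
    have htm2 : t ∈ Icc t c := ⟨le_rfl, ht.2⟩
    have h1 : HasDerivWithinAt F (V t (F t)) (Icc a t) t := by
      rw [hFf t htm1]
      exact (hf t htm1).congr hFf (hFf t htm1)
    have h2 : HasDerivWithinAt F (V t (F t)) (Icc t c) t := by
      rw [hFf t htm1, hfg]
      exact (hg t htm2).congr hFg (hFg t htm2)
    have h3 := h1.union h2
    rwa [Icc_union_Icc_eq_Icc hab hbc] at h3
  · have htm : t ∈ Icc b c := ⟨hgt.le, ht.2⟩
    have h1 : HasDerivWithinAt F (V t (F t)) (Icc b c) t := by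
      rw [hFg t htm]
      exact (hg t htm).congr hFg (hFg t htm)
    refine h1.mono_of_mem_nhdsWithin ?_
    rw [mem_nhdsWithin]
    exact ⟨Ioi b, isOpen_Ioi, hgt, fun s hs => ⟨hs.1.le, hs.2.2⟩⟩

variable [CompleteSpace E]

lemma exists_sol_fwd {V : ℝ → E → E} {L : ℝ≥0}
    (hL : ∀ t, LipschitzWith L (V t)) (hC : ∀ p, Continuous fun t => V t p)
    (hV0 : ∀ t, V t 0 = 0) (p₀ : E) (n : ℕ) :
    ∃ f : ℝ → E, f 0 = p₀ ∧ ∀ t ∈ Icc (0:ℝ) (n * (2 * ((L:ℝ) + 1))⁻¹),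
      HasDerivWithinAt f (V t (f t)) (Icc (0:ℝ) (n * (2 * ((L:ℝ)+1))⁻¹)) t := by
  have hL0 : (0:ℝ) ≤ L := L.coe_nonneg
  set h : ℝ := (2 * ((L:ℝ) + 1))⁻¹ with hh
  have hhpos : 0 < h := by positivity
  induction n with
  | zero =>
    refine ⟨fun _ => p₀, rfl, ?_⟩
    intro t ht
    simp only [Nat.cast_zero, zero_mul] at ht ⊢
    have ht0 : t = 0 := le_antisymm ht.2 ht.1
    subst ht0
    rw [Icc_self]
    exact hasDerivWithinAt_singleton' _ _ _
  | succ n ih =>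
    obtain ⟨f, hf0, hf⟩ := ih
    set c : ℝ := n * h with hc
    have hc0 : 0 ≤ c := by positivity
    have hpl : IsPicardLindelof V (tmin := c) (tmax := c + h) ⟨c, le_rfl, by linarith⟩ (f c)
        ⟨‖f c‖ + 1, by positivity⟩ 0 ⟨((L:ℝ) + 1) * (2 * ‖f c‖ + 1), by positivity⟩ (L + 1) := by
      constructor
      · intro t _
        exact ((hL t).weaken (le_self_add : L ≤ L + 1)).lipschitzOnWith
      · intro x _
        exact (hC x).continuousOn
      · intro t _ x hx
        show ‖V t x‖ ≤ ((L:ℝ) + 1) * (2 * ‖f c‖ + 1)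
        have h1 : ‖V t x‖ ≤ (L:ℝ) * ‖x‖ := by
          have h2 := (hL t).dist_le_mul x 0
          simpa [hV0 t, dist_zero_right] using h2
        have h3 : ‖x - f c‖ ≤ ‖f c‖ + 1 := mem_closedBall_iff_norm.mp hx
        have h4 : ‖x‖ - ‖f c‖ ≤ ‖x - f c‖ := norm_sub_norm_le x (f c)
        nlinarith [norm_nonneg (f c), norm_nonneg x]
      · show ((L:ℝ) + 1) * (2 * ‖f c‖ + 1) * max (c + h - c) (c - c) ≤ (‖f c‖ + 1) - ((0:ℝ≥0):ℝ)
        rw [NNReal.coe_zero, sub_zero]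
        have hmax : max (c + h - c) (c - c) = h := by
          rw [max_eq_left] <;> simp [hhpos.le]
        rw [hmax, hh]
        have hrw : ((L:ℝ) + 1) * (2 * ‖f c‖ + 1) * (2 * ((L:ℝ) + 1))⁻¹
            = (2 * ‖f c‖ + 1) / 2 := by
          field_simp
        rw [hrw]
        linarith [norm_nonneg (f c)]
    obtain ⟨g, hg0, hg⟩ := hpl.exists_eq_forall_mem_Icc_hasDerivWithinAt₀
    have hcc : c ≤ c + h := by linarith
    obtain ⟨F, hFf, hFsol⟩ := glue_sol hc0 hcc hf hg hg0.symm
    have hcast : ((n + 1 : ℕ) : ℝ) * h = c + h := by push_cast [hc]; ring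
    rw [hcast]
    exact ⟨F, by rw [hFf 0 ⟨le_rfl, hc0⟩, hf0], hFsol⟩

lemma exists_sol_Icc0 {V : ℝ → E → E} {L : ℝ≥0}
    (hL : ∀ t, LipschitzWith L (V t)) (hC : ∀ p, Continuous fun t => V t p)
    (hV0 : ∀ t, V t 0 = 0) (p₀ : E) (T : ℝ) :
    ∃ f : ℝ → E, f 0 = p₀ ∧ ∀ t ∈ Icc (0:ℝ) T,
      HasDerivWithinAt f (V t (f t)) (Icc (0:ℝ) T) t := by
  set h : ℝ := (2 * ((L:ℝ) + 1))⁻¹ with hh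
  have hhpos : 0 < h := by positivity
  set n : ℕ := ⌈T / h⌉₊ with hn
  have hTn : T ≤ n * h := by
    have h1 := Nat.le_ceil (T / h)
    calc T = T / h * h := by field_simp
    _ ≤ n * h := mul_le_mul_of_nonneg_right h1 hhpos.le
  obtain ⟨f, hf0, hf⟩ := exists_sol_fwd hL hC hV0 p₀ n
  exact ⟨f, hf0, fun t ht => (hf t (Icc_subset_Icc_right hTn ht)).mono
    (Icc_subset_Icc_right hTn)⟩

lemma exists_sol_Ioo {V : ℝ → E → E} {L : ℝ≥0}
    (hL : ∀ t, LipschitzWith L (V t)) (hC : ∀ p, Continuous fun t => V t p)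
    (hV0 : ∀ t, V t 0 = 0) (p₀ : E) (T : ℝ) (hT : 0 ≤ T) :
    ∃ f : ℝ → E, f 0 = p₀ ∧ ∀ t ∈ Ioo (-T) T, HasDerivAt f (V t (f t)) t := by
  set W : ℝ → E → E := fun t p => - V (-t) p with hW
  have hLW : ∀ t, LipschitzWith L (W t) := by
    intro t
    refine LipschitzWith.of_dist_le_mul fun p q => ?_
    have h0 : dist (W t p) (W t q) = dist (V (-t) p) (V (-t) q) := dist_neg_neg _ _
    rw [h0]
    exact (hL (-t)).dist_le_mul p q
  have hCW : ∀ p, Continuous fun t => W t p := fun p => ((hC p).comp continuous_neg).neg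
  have hVW0 : ∀ t, W t 0 = 0 := fun t => by simp [W, hV0]
  obtain ⟨g, hg0, hg⟩ := exists_sol_Icc0 hLW hCW hVW0 p₀ T
  obtain ⟨f, hf0, hf⟩ := exists_sol_Icc0 hL hC hV0 p₀ T
  have hgneg : ∀ t ∈ Icc (-T) 0, HasDerivWithinAt (fun s => g (-s))
      (V t ((fun s => g (-s)) t)) (Icc (-T) 0) t := by
    intro t ht
    have hmem : -t ∈ Icc 0 T := ⟨by linarith [ht.2], by linarith [ht.1]⟩
    have h1 := hg (-t) hmem
    have h2 : HasDerivWithinAt (fun s : ℝ => -s) (-1) (Icc (-T) 0) t :=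
      (hasDerivAt_neg' t).hasDerivWithinAt
    have hmt : MapsTo (fun s : ℝ => -s) (Icc (-T) 0) (Icc 0 T) := by
      intro s hs
      simp only [mem_Icc] at *
      constructor <;> linarith
    have h3 := h1.scomp t h2 hmt
    simpa [W, Function.comp_def] using h3
  have hfg0 : (fun s => g (-s)) 0 = f 0 := by simp [hg0, hf0]
  obtain ⟨F, hFneg, hFsol⟩ := glue_sol (neg_nonpos.mpr hT) hT hgneg hf hfg0
  refine ⟨F, ?_, ?_⟩
  · have := hFneg 0 ⟨neg_nonpos.mpr hT, le_rfl⟩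
    simpa [hg0] using this
  · intro t ht
    exact (hFsol t ⟨ht.1.le, ht.2.le⟩).hasDerivAt (Icc_mem_nhds ht.1 ht.2)

end Existence
open scoped NNReal
set_option maxHeartbeats 1000000

noncomputable def Vf (k ε : ℝ) (t : ℝ) (p : ℝ × ℝ) : ℝ × ℝ :=
  (p.2, -(k + ε * Real.cos t) * p.1)

lemma Vf_lip (k ε : ℝ) (c : ℝ≥0) (hc1 : 1 ≤ (c:ℝ)) (hc2 : |k| + |ε| ≤ (c:ℝ)) (t : ℝ) :
    LipschitzWith c (Vf k ε t) := by
  refine LipschitzWith.of_dist_le_mul fun p q => ?_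
  have hq : |k + ε * Real.cos t| ≤ (c:ℝ) := by
    calc |k + ε * Real.cos t| ≤ |k| + |ε * Real.cos t| := abs_add_le _ _
    _ ≤ |k| + |ε| * 1 := by
        rw [abs_mul]
        gcongr
        exact Real.abs_cos_le_one t
    _ ≤ (c:ℝ) := by linarith
  rw [Prod.dist_eq, Prod.dist_eq]
  have hd1 : (0:ℝ) ≤ max (dist p.1 q.1) (dist p.2 q.2) :=
    le_max_of_le_left dist_nonneg
  apply max_le
  · calc dist (Vf k ε t p).1 (Vf k ε t q).1 = dist p.2 q.2 := rfl
    _ ≤ max (dist p.1 q.1) (dist p.2 q.2) := le_max_right _ _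
    _ ≤ (c:ℝ) * max (dist p.1 q.1) (dist p.2 q.2) := le_mul_of_one_le_left hd1 hc1
  · have he : dist (Vf k ε t p).2 (Vf k ε t q).2
        = |k + ε * Real.cos t| * |p.1 - q.1| := by
      simp only [Vf, Real.dist_eq]
      rw [show -(k + ε*Real.cos t)*p.1 - -(k + ε*Real.cos t)*q.1
          = (k + ε*Real.cos t) * (q.1 - p.1) by ring, abs_mul, abs_sub_comm q.1 p.1]
    rw [he]
    calc |k + ε * Real.cos t| * |p.1 - q.1| ≤ (c:ℝ) * max (dist p.1 q.1) (dist p.2 q.2) := by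
          apply mul_le_mul hq _ (abs_nonneg _) (NNReal.coe_nonneg c)
          rw [Real.dist_eq, Real.dist_eq]
          exact le_max_left _ _

lemma Vf_cont (k ε : ℝ) (p : ℝ × ℝ) : Continuous fun t => Vf k ε t p := by
  unfold Vf
  fun_prop

lemma Vf_zero (k ε t : ℝ) : Vf k ε t 0 = 0 := by
  simp [Vf]

lemma cheb_formula {θ : ℝ} (hs : Real.sin θ ≠ 0) (g : ℤ → ℝ)
    (hrec : ∀ n : ℤ, g (n + 1) + g (n - 1) = 2 * Real.cos θ * g n) :
    ∀ n : ℤ, g n = g 0 * Real.cos (n * θ)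
      + ((g 1 - g 0 * Real.cos θ) / Real.sin θ) * Real.sin (n * θ) := by
  set β := (g 1 - g 0 * Real.cos θ) / Real.sin θ with hβ
  have hβ' : β * Real.sin θ = g 1 - g 0 * Real.cos θ := by
    rw [hβ, div_mul_cancel₀ _ hs]
  have key : ∀ n : ℤ, (g n = g 0 * Real.cos ((n:ℝ) * θ) + β * Real.sin ((n:ℝ) * θ)) ∧
      (g (n+1) = g 0 * Real.cos (((n:ℝ)+1) * θ) + β * Real.sin (((n:ℝ)+1) * θ)) := by
    intro n
    induction n using Int.induction_on with
    | zero =>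
      constructor
      · simp
      · push_cast
        rw [zero_add, one_mul]
        linarith [hβ']
    | succ n ih =>
      have h1 := ih.1
      have h2 := ih.2
      have hr := hrec ((n:ℤ) + 1)
      rw [add_sub_cancel_right] at hr
      constructor
      · push_cast
        push_cast at h2
        exact h2
      · push_cast
        push_cast at h1 h2
        have hc2 : Real.cos (((n:ℝ)+1+1)*θ)
            = 2*Real.cos θ * Real.cos (((n:ℝ)+1)*θ) - Real.cos ((n:ℝ)*θ) := by
          have e1 : ((n:ℝ)+1+1)*θ = ((n:ℝ)+1)*θ + θ := by ring
          have e2 : ((n:ℝ))*θ = ((n:ℝ)+1)*θ - θ := by ring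
          rw [e1, e2, Real.cos_add, Real.cos_sub]
          ring
        have hs2 : Real.sin (((n:ℝ)+1+1)*θ)
            = 2*Real.cos θ * Real.sin (((n:ℝ)+1)*θ) - Real.sin ((n:ℝ)*θ) := by
          have e1 : ((n:ℝ)+1+1)*θ = ((n:ℝ)+1)*θ + θ := by ring
          have e2 : ((n:ℝ))*θ = ((n:ℝ)+1)*θ - θ := by ring
          rw [e1, e2, Real.sin_add, Real.sin_sub]
          ring
        rw [hc2, hs2]
        linear_combination hr + 2*Real.cos θ * h2 - h1
    | pred n ih =>
      have h1 := ih.1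
      have h2 := ih.2
      have hr := hrec (-(n:ℤ))
      rw [sub_eq_add_neg, add_comm (-(n:ℤ)) (-1)] at hr
      -- hr : g (-n+1) + g (-1 + -n) = 2 cos θ * g (-n)
      constructor
      · push_cast
        push_cast at h1 h2
        have hc2 : Real.cos ((-(n:ℝ)-1)*θ)
            = 2*Real.cos θ * Real.cos ((-(n:ℝ))*θ) - Real.cos ((-(n:ℝ)+1)*θ) := by
          have e1 : (-(n:ℝ)-1)*θ = (-(n:ℝ))*θ - θ := by ring
          have e2 : (-(n:ℝ)+1)*θ = (-(n:ℝ))*θ + θ := by ring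
          rw [e1, e2, Real.cos_add, Real.cos_sub]
          ring
        have hs2 : Real.sin ((-(n:ℝ)-1)*θ)
            = 2*Real.cos θ * Real.sin ((-(n:ℝ))*θ) - Real.sin ((-(n:ℝ)+1)*θ) := by
          have e1 : (-(n:ℝ)-1)*θ = (-(n:ℝ))*θ - θ := by ring
          have e2 : (-(n:ℝ)+1)*θ = (-(n:ℝ))*θ + θ := by ring
          rw [e1, e2, Real.sin_add, Real.sin_sub]
          ring
        have harg : (-(n:ℤ) - 1) = (-1 + -(n:ℤ)) := by ring
        rw [harg]
        rw [hc2, hs2]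
        linear_combination hr + 2*Real.cos θ * h1 - h2
      · push_cast
        push_cast at h1
        have harg : (-(n:ℤ) - 1 + 1) = -(n:ℤ) := by ring
        rw [harg]
        have harg2 : (-(n:ℝ) - 1 + 1) = -(n:ℝ) := by ring
        rw [harg2]
        exact h1
  intro n
  exact (key n).1

lemma hill_bounded (k ε : ℝ) (u v : ℝ → ℝ × ℝ)
    (hu0 : u 0 = (1, 0)) (hv0 : v 0 = (0, 1))
    (hud : ∀ t ∈ Ioo (-100:ℝ) 100, HasDerivAt u (Vf k ε t (u t)) t)
    (hvd : ∀ t ∈ Ioo (-100:ℝ) 100, HasDerivAt v (Vf k ε t (v t)) t)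
    (htr : |(u (2*π)).1 + (v (2*π)).2| < 2)
    (ξ : ℝ → ℝ) (hξ1 : Differentiable ℝ ξ) (hξ2 : Differentiable ℝ (deriv ξ))
    (hode : ∀ τ, deriv (deriv ξ) τ + (k + ε * Real.cos τ) * ξ τ = 0) :
    ∃ M : ℝ, ∀ τ, |ξ τ| ≤ M := by
  have hπ : π < 3.15 := Real.pi_lt_d2
  have hπ0 : 0 < π := Real.pi_pos
  have hmem2π : (2*π) ∈ Ioo (-100:ℝ) 100 := by constructor <;> nlinarith
  -- Lipschitz constant
  set c : ℝ≥0 := Real.toNNReal (1 + |k| + |ε|) with hcdef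
  have hcval : (c:ℝ) = 1 + |k| + |ε| := by
    rw [hcdef, Real.coe_toNNReal _ (by positivity)]
  have hlip : ∀ t, LipschitzWith c (Vf k ε t) := by
    intro t
    apply Vf_lip k ε c (by rw [hcval]; linarith [abs_nonneg k, abs_nonneg ε]) (by rw [hcval]; linarith [abs_nonneg k, abs_nonneg ε])
  -- uniqueness of solutions
  have uniq : ∀ f g : ℝ → ℝ × ℝ,
      (∀ t ∈ Ioo (-100:ℝ) 100, HasDerivAt f (Vf k ε t (f t)) t) →
      (∀ t ∈ Ioo (-100:ℝ) 100, HasDerivAt g (Vf k ε t (g t)) t) →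
      f 0 = g 0 → EqOn f g (Ioo (-100:ℝ) 100) := by
    intro f g hf hg h0
    exact ODE_solution_unique_of_mem_Ioo (v := Vf k ε)
      (s := fun _ => (univ : Set (ℝ×ℝ))) (fun t _ => (hlip t).lipschitzOnWith)
      (⟨by norm_num, by norm_num⟩ : (0:ℝ) ∈ Ioo (-100:ℝ) 100)
      (fun t ht => ⟨hf t ht, mem_univ _⟩) (fun t ht => ⟨hg t ht, mem_univ _⟩) h0
  -- linear combinations of u, v are solutions
  have hlin : ∀ x y : ℝ, ∀ t ∈ Ioo (-100:ℝ) 100,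
      HasDerivAt (fun s => x • u s + y • v s) (Vf k ε t (x • u t + y • v t)) t := by
    intro x y t ht
    have h1 : HasDerivAt (fun s => x • u s + y • v s) _ t :=
      ((hud t ht).const_smul x).add ((hvd t ht).const_smul y)
    convert h1 using 1
    apply Prod.ext <;> simp [Vf, smul_eq_mul] <;> ring
  -- decomposition of any solution
  have dec : ∀ f : ℝ → ℝ × ℝ,
      (∀ t ∈ Ioo (-100:ℝ) 100, HasDerivAt f (Vf k ε t (f t)) t) →
      ∀ t ∈ Ioo (-100:ℝ) 100, f t = (f 0).1 • u t + (f 0).2 • v t := by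
    intro f hf t ht
    have h0 : f 0 = (f 0).1 • u 0 + (f 0).2 • v 0 := by
      rw [hu0, hv0]
      apply Prod.ext <;> simp
    exact uniq f (fun s => (f 0).1 • u s + (f 0).2 • v s) hf (hlin _ _) h0 ht
  set a := (u (2*π)).1 with ha
  set b := (v (2*π)).1 with hb
  set cc := (u (2*π)).2 with hcc
  set d := (v (2*π)).2 with hd
  -- component derivative helpers
  have comp1 : ∀ (f : ℝ → ℝ×ℝ) (D : ℝ×ℝ) (t : ℝ), HasDerivAt f D t →
      HasDerivAt (fun s => (f s).1) D.1 t := by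
    intro f D t h
    have := (ContinuousLinearMap.fst ℝ ℝ ℝ).hasFDerivAt.comp_hasDerivAt t h
    simpa [Function.comp_def] using this
  have comp2 : ∀ (f : ℝ → ℝ×ℝ) (D : ℝ×ℝ) (t : ℝ), HasDerivAt f D t →
      HasDerivAt (fun s => (f s).2) D.2 t := by
    intro f D t h
    have := (ContinuousLinearMap.snd ℝ ℝ ℝ).hasFDerivAt.comp_hasDerivAt t h
    simpa [Function.comp_def] using this
  -- Wronskian
  have hdet : a * d - cc * b = 1 := by
    set w : ℝ → ℝ := fun t => (u t).1 * (v t).2 - (u t).2 * (v t).1 with hw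
    have hIoo : ∀ t ∈ Icc (0:ℝ) (2*π), t ∈ Ioo (-100:ℝ) 100 := by
      intro t ht
      constructor <;> nlinarith [ht.1, ht.2]
    have hwd : ∀ t ∈ Ico (0:ℝ) (2*π), HasDerivWithinAt w 0 (Ici t) t := by
      intro t ht
      have htI := hIoo t ⟨ht.1, ht.2.le⟩
      have hu' := hud t htI
      have hv' := hvd t htI
      have hD : HasDerivAt w
          ((Vf k ε t (u t)).1 * (v t).2 + (u t).1 * (Vf k ε t (v t)).2
            - ((Vf k ε t (u t)).2 * (v t).1 + (u t).2 * (Vf k ε t (v t)).1)) t :=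
        ((comp1 _ _ _ hu').mul (comp2 _ _ _ hv')).sub
          ((comp2 _ _ _ hu').mul (comp1 _ _ _ hv'))
      have hzero : (Vf k ε t (u t)).1 * (v t).2 + (u t).1 * (Vf k ε t (v t)).2
            - ((Vf k ε t (u t)).2 * (v t).1 + (u t).2 * (Vf k ε t (v t)).1) = 0 := by
        simp [Vf]
        ring
      rw [hzero] at hD
      exact hD.hasDerivWithinAt
    have hwc : ContinuousOn w (Icc (0:ℝ) (2*π)) := by
      apply continuousOn_of_forall_continuousAt
      intro t ht
      have htI := hIoo t ht
      exact (((comp1 _ _ _ (hud t htI)).continuousAt.mul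
        (comp2 _ _ _ (hvd t htI)).continuousAt).sub
        ((comp2 _ _ _ (hud t htI)).continuousAt.mul
        (comp1 _ _ _ (hvd t htI)).continuousAt))
    have := constant_of_has_deriv_right_zero hwc hwd (2*π) ⟨by positivity, le_rfl⟩
    have hw0 : w 0 = 1 := by simp [hw, hu0, hv0]
    rw [hw0] at this
    simpa [hw, ha, hb, hcc, hd] using this
  -- shift invariance
  have shift : ∀ (C : ℝ), (∀ s : ℝ, Real.cos (s + C) = Real.cos s) →
      ∀ f : ℝ → ℝ×ℝ, (∀ t : ℝ, HasDerivAt f (Vf k ε t (f t)) t) →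
      ∀ t : ℝ, HasDerivAt (fun s => f (s + C)) (Vf k ε t (f (t + C))) t := by
    intro C hcos f hf t
    have h1 : HasDerivAt (fun s : ℝ => s + C) 1 t := (hasDerivAt_id t).add_const _
    have h2 := HasDerivAt.scomp t (hf (t + C)) h1
    have h3 : Vf k ε (t + C) (f (t + C)) = Vf k ε t (f (t + C)) := by
      simp [Vf, hcos t]
    rw [h3] at h2
    simpa [Function.comp_def] using h2
  -- forward monodromy relation for global solutions
  have fwd : ∀ f : ℝ → ℝ×ℝ, (∀ t, HasDerivAt f (Vf k ε t (f t)) t) →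
      f (2*π) = ((f 0).1 * a + (f 0).2 * b, (f 0).1 * cc + (f 0).2 * d) := by
    intro f hf
    have hh := dec f (fun t _ => hf t) (2*π) hmem2π
    rw [hh]
    apply Prod.ext <;> simp [ha, hb, hcc, hd, smul_eq_mul]
  -- key identity
  have keyid : ∀ f : ℝ → ℝ×ℝ, (∀ t, HasDerivAt f (Vf k ε t (f t)) t) →
      ∀ t ∈ Icc (0:ℝ) (2*π), (f (t + 2*π)).1 + (f (t + -(2*π))).1 = (a + d) * (f t).1 := by
    intro f hf t ht
    have htI : t ∈ Ioo (-100:ℝ) 100 := by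
      constructor <;> nlinarith [ht.1, ht.2]
    set x := (f 0).1 with hx
    set y := (f 0).2 with hy
    have hcosp : ∀ s : ℝ, Real.cos (s + 2*π) = Real.cos s := fun s => Real.cos_add_two_pi s
    have hcosm : ∀ s : ℝ, Real.cos (s + -(2*π)) = Real.cos s := by
      intro s
      rw [← Real.cos_sub_two_pi s, sub_eq_add_neg]
    have hsolp := shift (2*π) hcosp f hf
    have hsolm := shift (-(2*π)) hcosm f hf
    have hPl : f (t + 2*π) = (f (2*π)).1 • u t + (f (2*π)).2 • v t := by
      have hh := dec (fun s => f (s + 2*π)) (fun s _ => hsolp s) t htI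
      simpa using hh
    have hMi : f (t + -(2*π)) = (f (-(2*π))).1 • u t + (f (-(2*π))).2 • v t := by
      have hh := dec (fun s => f (s + -(2*π))) (fun s _ => hsolm s) t htI
      simpa using hh
    have hfw := fwd f hf
    have hratio := fwd (fun s => f (s + -(2*π))) (fun s => hsolm s)
    simp only [add_neg_cancel] at hratio
    set p1 := (f (-(2*π))).1 with hp1def
    set p2 := (f (-(2*π))).2 with hp2def
    have hzero1 : (0:ℝ) + -(2*π) = -(2*π) := by ring
    rw [hzero1] at hratio
    have E1 : x = p1 * a + p2 * b := by
      have := congrArg Prod.fst hratio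
      simpa [hx, hp1def, hp2def] using this
    have E2 : y = p1 * cc + p2 * d := by
      have := congrArg Prod.snd hratio
      simpa [hy, hp1def, hp2def] using this
    have hp1 : p1 = d * x - b * y := by
      calc p1 = p1 * (a * d - cc * b) := by rw [hdet]; ring
      _ = d * (p1 * a + p2 * b) - b * (p1 * cc + p2 * d) := by ring
      _ = d * x - b * y := by rw [← E1, ← E2]
    have hp2 : p2 = -cc * x + a * y := by
      calc p2 = p2 * (a * d - cc * b) := by rw [hdet]; ring
      _ = a * (p1 * cc + p2 * d) - cc * (p1 * a + p2 * b) := by ring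
      _ = -cc * x + a * y := by rw [← E1, ← E2]; ring
    have hdect := dec f (fun s _ => hf s) t htI
    have cPl : (f (t + 2*π)).1 = (x*a + y*b) * (u t).1 + (x*cc + y*d) * (v t).1 := by
      rw [hPl, hfw]
      simp [smul_eq_mul, hx, hy]
    have cMi : (f (t + -(2*π))).1 = p1 * (u t).1 + p2 * (v t).1 := by
      rw [hMi]
      simp [smul_eq_mul, hp1def, hp2def]
    have ct : (f t).1 = x * (u t).1 + y * (v t).1 := by
      rw [hdect]
      simp [smul_eq_mul, hx, hy]
    rw [cPl, cMi, ct, hp1, hp2]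
    ring
  -- the system solution attached to ξ
  set Xi : ℝ → ℝ × ℝ := fun s => (ξ s, deriv ξ s) with hXidef
  have hXi : ∀ t, HasDerivAt Xi (Vf k ε t (Xi t)) t := by
    intro t
    have h1 : HasDerivAt ξ (deriv ξ t) t := (hξ1 t).hasDerivAt
    have h2 : HasDerivAt (deriv ξ) (deriv (deriv ξ) t) t := (hξ2 t).hasDerivAt
    have h3 : deriv (deriv ξ) t = -(k + ε * Real.cos t) * ξ t := by
      have := hode t
      linarith [hode t]
    rw [h3] at h2
    exact h1.prodMk h2
  -- trace and angle
  set tr := a + d with htrdef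
  have habs : |tr| < 2 := htr
  have h2' : |tr / 2| < 1 := by
    rw [abs_div, abs_two]
    linarith
  have hbounds := abs_lt.mp h2'
  set θ := Real.arccos (tr / 2) with hθ
  have hcosθ : Real.cos θ = tr / 2 := Real.cos_arccos hbounds.1.le hbounds.2.le
  have hsinpos : 0 < Real.sin θ := by
    rw [hθ, Real.sin_arccos]
    apply Real.sqrt_pos.mpr
    nlinarith [hbounds.1, hbounds.2]
  -- compactness bound
  obtain ⟨S, hS⟩ : ∃ S : ℝ, ∀ t ∈ Icc (0:ℝ) 20, |ξ t| ≤ S := by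
    obtain ⟨S, hS⟩ := (isCompact_Icc (a := (0:ℝ)) (b := 20)).bddAbove_image
      (f := fun t => |ξ t|) (hξ1.continuous.abs.continuousOn)
    exact ⟨S, fun t ht => hS (mem_image_of_mem _ ht)⟩
  have hS0 : 0 ≤ S := le_trans (abs_nonneg _) (hS 0 ⟨le_rfl, by norm_num⟩)
  refine ⟨S + (S + S) / Real.sin θ, ?_⟩
  intro τ
  set n : ℤ := ⌊τ / (2*π)⌋ with hn
  set r : ℝ := τ - (n:ℝ) * (2*π) with hr
  have hr0 : 0 ≤ r := Int.sub_floor_div_mul_nonneg τ (by positivity)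
  have hr1 : r < 2*π := Int.sub_floor_div_mul_lt τ (by positivity)
  have hrIcc : r ∈ Icc (0:ℝ) (2*π) := ⟨hr0, hr1.le⟩
  -- recurrence for g m = ξ (r + 2π m)
  set g : ℤ → ℝ := fun m => ξ (r + 2*π*(m:ℝ)) with hg
  have hrec : ∀ m : ℤ, g (m + 1) + g (m - 1) = 2 * Real.cos θ * g m := by
    intro m
    have hcosn : ∀ s : ℝ, Real.cos (s + 2*π*(m:ℝ)) = Real.cos s := by
      intro s
      have := Real.cos_add_int_mul_two_pi s m
      rw [show s + 2*π*(m:ℝ) = s + (m:ℝ)*(2*π) by ring]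
      exact this
    have hsol := shift (2*π*(m:ℝ)) hcosn Xi hXi
    have H := keyid (fun s => Xi (s + 2*π*(m:ℝ))) hsol r hrIcc
    have A1 : r + 2*π*((m+1:ℤ):ℝ) = (r + 2*π) + 2*π*(m:ℝ) := by push_cast; ring
    have A2 : r + 2*π*((m-1:ℤ):ℝ) = (r + -(2*π)) + 2*π*(m:ℝ) := by push_cast; ring
    have hcos2 : 2 * Real.cos θ = a + d := by rw [hcosθ]; ring
    show ξ (r + 2*π*((m+1:ℤ):ℝ)) + ξ (r + 2*π*((m-1:ℤ):ℝ)) = 2 * Real.cos θ * ξ (r + 2*π*(m:ℝ))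
    rw [A1, A2, hcos2]
    exact H
  have hform := cheb_formula (ne_of_gt hsinpos) g hrec
  have hτ : τ = r + 2*π*(n:ℝ) := by rw [hr]; ring
  have hgn : ξ τ = g n := by rw [hτ]
  rw [hgn]
  have hg0 : |g 0| ≤ S := by
    have : g 0 = ξ r := by simp [hg]
    rw [this]
    apply hS r ⟨hr0, by nlinarith⟩
  have hg1 : |g 1| ≤ S := by
    have : g 1 = ξ (r + 2*π) := by simp [hg]
    rw [this]
    apply hS _ ⟨by positivity, by nlinarith⟩
  set β := (g 1 - g 0 * Real.cos θ) / Real.sin θ with hβ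
  have hβb : |β| ≤ (S + S) / Real.sin θ := by
    rw [hβ, abs_div, abs_of_pos hsinpos]
    gcongr
    calc |g 1 - g 0 * Real.cos θ| = |g 1 + -(g 0 * Real.cos θ)| := by ring_nf
    _ ≤ |g 1| + |-(g 0 * Real.cos θ)| := abs_add_le _ _
    _ = |g 1| + |g 0| * |Real.cos θ| := by rw [abs_neg, abs_mul]
    _ ≤ S + S := by
        have h1 : |Real.cos θ| ≤ 1 := Real.abs_cos_le_one _
        nlinarith [abs_nonneg (g 0)]
  have hfn := hform n
  calc |g n| = |g 0 * Real.cos ((n:ℝ)*θ) + β * Real.sin ((n:ℝ)*θ)| := by rw [← hfn]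
  _ ≤ |g 0 * Real.cos ((n:ℝ)*θ)| + |β * Real.sin ((n:ℝ)*θ)| := abs_add_le _ _
  _ ≤ S + (S + S) / Real.sin θ := by
      rw [abs_mul, abs_mul]
      have h1 : |Real.cos ((n:ℝ)*θ)| ≤ 1 := Real.abs_cos_le_one _
      have h2 : |Real.sin ((n:ℝ)*θ)| ≤ 1 := Real.abs_sin_le_one _
      have h3 : (0:ℝ) ≤ (S + S) / Real.sin θ := by positivity
      have t1 : |g 0| * |Real.cos ((n:ℝ)*θ)| ≤ S * 1 :=
        mul_le_mul hg0 h1 (abs_nonneg _) hS0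
      have t2 : |β| * |Real.sin ((n:ℝ)*θ)| ≤ ((S + S) / Real.sin θ) * 1 :=
        mul_le_mul hβb h2 (abs_nonneg _) h3
      linarith

lemma trace_cont (k : ℝ) (hk : 0 < k) :
    ∃ C : ℝ, 0 < C ∧ ∀ ε : ℝ, |ε| ≤ 1 → ∀ u v : ℝ → ℝ × ℝ,
      u 0 = (1, 0) → v 0 = (0, 1) →
      (∀ t ∈ Ioo (-100:ℝ) 100, HasDerivAt u (Vf k ε t (u t)) t) →
      (∀ t ∈ Ioo (-100:ℝ) 100, HasDerivAt v (Vf k ε t (v t)) t) →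
      |(u (2*π)).1 + (v (2*π)).2 - 2 * Real.cos (2*π*Real.sqrt k)| ≤ C * |ε| := by
  have hπ0 : 0 < π := Real.pi_pos
  have hπ : π < 3.15 := Real.pi_lt_d2
  set ω := Real.sqrt k with hω
  have hω0 : 0 < ω := Real.sqrt_pos.mpr hk
  have hωsq : ω^2 = k := Real.sq_sqrt hk.le
  set K : ℝ≥0 := Real.toNNReal (k + 2) with hK
  have hKval : (K:ℝ) = k + 2 := Real.coe_toNNReal _ (by linarith)
  have hKne : (K:ℝ) ≠ 0 := by rw [hKval]; linarith
  set B : ℝ := Real.exp ((k+2)*(2*π)) with hB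
  have hB0 : 0 < B := Real.exp_pos _
  set C : ℝ := 2 * (B * Real.exp ((k+2)*(2*π)) / (k+2)) with hC
  have hC0 : 0 < C := by rw [hC]; positivity
  refine ⟨C, hC0, ?_⟩
  intro ε hε u v hu0 hv0 hud hvd
  have hlipε : ∀ t, LipschitzWith K (Vf k ε t) := by
    intro t
    apply Vf_lip k ε K (by rw [hKval]; linarith)
    rw [hKval, abs_of_pos hk]
    linarith
  have hlip0 : ∀ t, LipschitzWith K (Vf k 0 t) := by
    intro t
    apply Vf_lip k 0 K (by rw [hKval]; linarith)
    rw [hKval, abs_of_pos hk]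
    simp
  have hsub : Icc (0:ℝ) (2*π) ⊆ Ioo (-100:ℝ) 100 := by
    intro t ht
    constructor <;> nlinarith [ht.1, ht.2]
  -- norm bound for solutions
  have normb : ∀ w : ℝ → ℝ×ℝ,
      (∀ t ∈ Ioo (-100:ℝ) 100, HasDerivAt w (Vf k ε t (w t)) t) → ‖w 0‖ ≤ 1 →
      ∀ t ∈ Icc (0:ℝ) (2*π), ‖w t‖ ≤ B := by
    intro w hw hw0 t ht
    have hcont : ContinuousOn w (Icc (0:ℝ) (2*π)) :=
      continuousOn_of_forall_continuousAt fun s hs => (hw s (hsub hs)).continuousAt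
    have hder : ∀ s ∈ Ico (0:ℝ) (2*π), HasDerivWithinAt w (Vf k ε s (w s)) (Ici s) s :=
      fun s hs => (hw s (hsub ⟨hs.1, hs.2.le⟩)).hasDerivWithinAt
    have hcont0 : ContinuousOn (fun _ : ℝ => (0:ℝ×ℝ)) (Icc (0:ℝ) (2*π)) := continuousOn_const
    have hder0 : ∀ s ∈ Ico (0:ℝ) (2*π),
        HasDerivWithinAt (fun _ : ℝ => (0:ℝ×ℝ)) (Vf k ε s ((fun _ : ℝ => (0:ℝ×ℝ)) s)) (Ici s) s := by
      intro s hs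
      have hz : Vf k ε s ((fun _ : ℝ => (0:ℝ×ℝ)) s) = 0 := Vf_zero k ε s
      rw [hz]
      exact (hasDerivWithinAt_const s _ (0:ℝ×ℝ))
    have hd0 : dist (w 0) ((fun _ : ℝ => (0:ℝ×ℝ)) 0) ≤ 1 := by
      simpa [dist_zero_right] using hw0
    have := dist_le_of_trajectories_ODE hlipε hcont hder hcont0 hder0 hd0 t ht
    have hexp : Real.exp ((K:ℝ) * (t - 0)) ≤ B := by
      rw [hB, hKval]
      apply Real.exp_le_exp.mpr
      nlinarith [ht.1, ht.2]
    calc ‖w t‖ = dist (w t) ((fun _ : ℝ => (0:ℝ×ℝ)) t) := by simp [dist_zero_right]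
    _ ≤ 1 * Real.exp ((K:ℝ) * (t - 0)) := this
    _ ≤ B := by rw [one_mul]; exact hexp
  -- explicit solutions at ε = 0
  set U0 : ℝ → ℝ×ℝ := fun t => (Real.cos (ω*t), -(ω * Real.sin (ω*t))) with hU0
  set V0 : ℝ → ℝ×ℝ := fun t => (ω⁻¹ * Real.sin (ω*t), Real.cos (ω*t)) with hV0'
  have hin : ∀ t : ℝ, HasDerivAt (fun s : ℝ => ω*s) ω t := by
    intro t
    simpa using (hasDerivAt_id t).const_mul ω
  have hU0d : ∀ t : ℝ, HasDerivAt U0 (Vf k 0 t (U0 t)) t := by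
    intro t
    have h1 : HasDerivAt (fun s => Real.cos (ω*s)) (-Real.sin (ω*t) * ω) t :=
      (Real.hasDerivAt_cos (ω*t)).comp t (hin t)
    have h2 : HasDerivAt (fun s => -(ω * Real.sin (ω*s))) (-(ω * (Real.cos (ω*t) * ω))) t := by
      have h3 : HasDerivAt (fun s => Real.sin (ω*s)) (Real.cos (ω*t) * ω) t :=
        (Real.hasDerivAt_sin (ω*t)).comp t (hin t)
      exact (h3.const_mul ω).neg
    have h4 := h1.prodMk h2
    convert h4 using 1
    apply Prod.ext
    · simp [Vf, U0]
      ring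
    · simp [Vf, U0]
      rw [← hωsq]
      ring
  have hV0d : ∀ t : ℝ, HasDerivAt V0 (Vf k 0 t (V0 t)) t := by
    intro t
    have h3 : HasDerivAt (fun s => Real.sin (ω*s)) (Real.cos (ω*t) * ω) t :=
      (Real.hasDerivAt_sin (ω*t)).comp t (hin t)
    have h1 : HasDerivAt (fun s => ω⁻¹ * Real.sin (ω*s)) (ω⁻¹ * (Real.cos (ω*t) * ω)) t :=
      h3.const_mul ω⁻¹
    have h2 : HasDerivAt (fun s => Real.cos (ω*s)) (-Real.sin (ω*t) * ω) t :=
      (Real.hasDerivAt_cos (ω*t)).comp t (hin t)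
    have h4 := h1.prodMk h2
    convert h4 using 1
    apply Prod.ext
    · simp [Vf, V0]
      field_simp
    · simp [Vf, V0]
      rw [← hωsq]
      field_simp
  -- comparison of trajectories
  have approx : ∀ (w W : ℝ → ℝ×ℝ),
      (∀ t ∈ Ioo (-100:ℝ) 100, HasDerivAt w (Vf k ε t (w t)) t) →
      (∀ t : ℝ, HasDerivAt W (Vf k 0 t (W t)) t) → w 0 = W 0 → ‖w 0‖ ≤ 1 →
      dist (w (2*π)) (W (2*π)) ≤ C/2 * |ε| := by
    intro w W hw hW h0 hn0
    have hb := normb w hw hn0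
    have hcont : ContinuousOn w (Icc (0:ℝ) (2*π)) :=
      continuousOn_of_forall_continuousAt fun s hs => (hw s (hsub hs)).continuousAt
    have hder : ∀ s ∈ Ico (0:ℝ) (2*π), HasDerivWithinAt w (Vf k ε s (w s)) (Ici s) s :=
      fun s hs => (hw s (hsub ⟨hs.1, hs.2.le⟩)).hasDerivWithinAt
    have hfb : ∀ t ∈ Ico (0:ℝ) (2*π), dist (Vf k ε t (w t)) (Vf k 0 t (w t)) ≤ |ε| * B := by
      intro t ht
      rw [Prod.dist_eq]
      apply max_le
      · have : dist (Vf k ε t (w t)).1 (Vf k 0 t (w t)).1 = 0 := by simp [Vf]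
        rw [this]
        positivity
      · have he : dist (Vf k ε t (w t)).2 (Vf k 0 t (w t)).2 = |ε * Real.cos t| * |(w t).1| := by
          simp only [Vf, Real.dist_eq]
          rw [show -(k + ε*Real.cos t)*(w t).1 - -(k + 0*Real.cos t)*(w t).1
              = -(ε*Real.cos t*(w t).1) by ring, abs_neg, abs_mul]
        rw [he]
        have h1 : |ε * Real.cos t| ≤ |ε| := by
          rw [abs_mul]
          nlinarith [Real.abs_cos_le_one t, abs_nonneg ε]
        have h2 : |(w t).1| ≤ B := by
          have h3 : ‖(w t).1‖ ≤ ‖w t‖ := norm_fst_le (w t)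
          rw [Real.norm_eq_abs] at h3
          exact le_trans h3 (hb t ⟨ht.1, ht.2.le⟩)
        exact mul_le_mul h1 h2 (abs_nonneg _) (abs_nonneg ε)
    have hcontW : ContinuousOn W (Icc (0:ℝ) (2*π)) :=
      continuousOn_of_forall_continuousAt fun s _ => (hW s).continuousAt
    have hderW : ∀ s ∈ Ico (0:ℝ) (2*π), HasDerivWithinAt W (Vf k 0 s (W s)) (Ici s) s :=
      fun s _ => (hW s).hasDerivWithinAt
    have hgb : ∀ t ∈ Ico (0:ℝ) (2*π), dist (Vf k 0 t (W t)) (Vf k 0 t (W t)) ≤ 0 := by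
      intro t _
      simp
    have hd0 : dist (w 0) (W 0) ≤ 0 := by rw [h0]; simp
    have key := dist_le_of_approx_trajectories_ODE hlip0 hcont hder hfb hcontW hderW hgb hd0
      (2*π) ⟨by positivity, le_rfl⟩
    have hgw : gronwallBound 0 (K:ℝ) (|ε| * B + 0) (2*π - 0) ≤ C/2 * |ε| := by
      rw [gronwallBound_of_K_ne_0 hKne]
      simp only []
      have hEpos : (0:ℝ) < Real.exp ((K:ℝ) * (2*π - 0)) := Real.exp_pos _
      have hEe : Real.exp ((K:ℝ) * (2*π - 0)) = Real.exp ((k+2)*(2*π)) := by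
        rw [hKval]
        ring_nf
      rw [hEe]
      have hC2 : C/2 = B * Real.exp ((k+2)*(2*π)) / (k+2) := by rw [hC]; ring
      rw [hC2, hKval]
      rw [zero_mul, zero_add, add_zero]
      have hek : (0:ℝ) < k + 2 := by linarith
      have hE1 : Real.exp ((k+2)*(2*π)) - 1 ≤ Real.exp ((k+2)*(2*π)) := by linarith
      calc |ε| * B / (k+2) * (Real.exp ((k+2)*(2*π)) - 1)
          ≤ |ε| * B / (k+2) * Real.exp ((k+2)*(2*π)) := by
            apply mul_le_mul_of_nonneg_left hE1
            positivity
      _ = B * Real.exp ((k+2)*(2*π)) / (k+2) * |ε| := by ring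
    exact le_trans key hgw
  have hU00 : U0 0 = ((1:ℝ), (0:ℝ)) := by simp [hU0]
  have hV00 : V0 0 = ((0:ℝ), (1:ℝ)) := by simp [hV0']
  have hnu : ‖u 0‖ ≤ 1 := by
    rw [hu0]
    rw [Prod.norm_def]
    simp
  have hnv : ‖v 0‖ ≤ 1 := by
    rw [hv0]
    rw [Prod.norm_def]
    simp
  have d1 := approx u U0 hud hU0d (by rw [hu0, hU00]) hnu
  have d2 := approx v V0 hvd hV0d (by rw [hv0, hV00]) hnv
  have e1 : |(u (2*π)).1 - Real.cos (2*π*ω)| ≤ C/2 * |ε| := by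
    have h3 : dist (u (2*π)).1 (U0 (2*π)).1 ≤ dist (u (2*π)) (U0 (2*π)) := by
      rw [Prod.dist_eq]
      exact le_max_left _ _
    have h4 : (U0 (2*π)).1 = Real.cos (2*π*ω) := by
      simp [hU0]
      ring_nf
    rw [Real.dist_eq, h4] at h3
    exact le_trans h3 d1
  have e2 : |(v (2*π)).2 - Real.cos (2*π*ω)| ≤ C/2 * |ε| := by
    have h3 : dist (v (2*π)).2 (V0 (2*π)).2 ≤ dist (v (2*π)) (V0 (2*π)) := by
      rw [Prod.dist_eq]
      exact le_max_right _ _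
    have h4 : (V0 (2*π)).2 = Real.cos (2*π*ω) := by
      simp [hV0']
      ring_nf
    rw [Real.dist_eq, h4] at h3
    exact le_trans h3 d2
  calc |(u (2*π)).1 + (v (2*π)).2 - 2 * Real.cos (2*π*ω)|
      = |((u (2*π)).1 - Real.cos (2*π*ω)) + ((v (2*π)).2 - Real.cos (2*π*ω))| := by ring_nf
  _ ≤ |(u (2*π)).1 - Real.cos (2*π*ω)| + |(v (2*π)).2 - Real.cos (2*π*ω)| := abs_add_le _ _
  _ ≤ C/2 * |ε| + C/2 * |ε| := add_le_add e1 e2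
  _ = C * |ε| := by ring

/-- Away from the parametric resonances `2ω = N`, the linearization of the charged
pendulum at `P₁`, the Hill equation `ξ'' + (α + μ/4 + ε cos τ) ξ = 0`, has all its
solutions bounded on `ℝ` for all sufficiently small `|ε|`. -/
theorem hill_nonresonant_stable (μ α : ℝ) (h : α + μ / 4 > 0)
    (hres : ∀ N : ℕ, 0 < N → 2 * Real.sqrt (α + μ / 4) ≠ (N : ℝ)) :
    ∃ ε₀ > 0, ∀ ε : ℝ, |ε| < ε₀ →
      ∀ ξ : ℝ → ℝ, Differentiable ℝ ξ → Differentiable ℝ (deriv ξ) →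
        (∀ τ, deriv (deriv ξ) τ + (α + μ / 4 + ε * Real.cos τ) * ξ τ = 0) →
        ∃ M : ℝ, ∀ τ, |ξ τ| ≤ M := by
  set k : ℝ := α + μ / 4 with hkdef
  set ω : ℝ := Real.sqrt k with hωdef
  have hω0 : 0 < ω := Real.sqrt_pos.mpr h
  have hc2 : |Real.cos (2*π*ω)| < 1 := by
    rcases lt_or_eq_of_le (Real.abs_cos_le_one (2*π*ω)) with hlt | heq
    · exact hlt
    · exfalso
      have hπ0 : (0:ℝ) < π := Real.pi_pos
      have hsq : Real.sin (2*π*ω)^2 = 0 := by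
        have h1 := Real.sin_sq_add_cos_sq (2*π*ω)
        have h2 : Real.cos (2*π*ω)^2 = 1 := by
          rw [← sq_abs, heq]
          norm_num
        linarith
      have hsin : Real.sin (2*π*ω) = 0 := by
        exact pow_eq_zero_iff (two_ne_zero) |>.mp hsq
      obtain ⟨m, hm⟩ := Real.sin_eq_zero_iff.mp hsin
      have hωm : (m:ℝ) = 2*ω := by
        have h3 : (m:ℝ) * π = (2*ω) * π := by linarith [hm]
        exact mul_right_cancel₀ (ne_of_gt hπ0) h3
      have hm0 : 0 < m := by
        have h5 : (0:ℝ) < (m:ℝ) := by rw [hωm]; positivity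
        exact_mod_cast h5
      refine hres m.toNat ?_ ?_
      · have := Int.toNat_of_nonneg hm0.le
        omega
      · have h6 : (m.toNat : ℤ) = m := Int.toNat_of_nonneg hm0.le
        have h7 : ((m.toNat : ℕ) : ℝ) = (m:ℝ) := by exact_mod_cast congrArg (Int.cast : ℤ → ℝ) h6
        rw [h7, ← hωm]
  obtain ⟨C, hC0, hCb⟩ := trace_cont k h
  set c2 : ℝ := |Real.cos (2*π*ω)| with hc2def
  set ε₀ : ℝ := min 1 ((2 - 2*c2) / (2*C)) with hε₀def
  have hε₀pos : 0 < ε₀ := by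
    apply lt_min one_pos
    apply div_pos (by linarith) (by linarith)
  refine ⟨ε₀, hε₀pos, ?_⟩
  intro ε hεlt ξ hξ1 hξ2 hode
  set cL : ℝ≥0 := Real.toNNReal (1 + |k| + |ε|) with hcL
  have hcLval : (cL:ℝ) = 1 + |k| + |ε| := Real.coe_toNNReal _ (by positivity)
  have hlip : ∀ t, LipschitzWith cL (Vf k ε t) := by
    intro t
    apply Vf_lip k ε cL (by rw [hcLval]; linarith [abs_nonneg k, abs_nonneg ε])
    rw [hcLval]
    linarith
  obtain ⟨u, hu0, hud⟩ := exists_sol_Ioo hlip (Vf_cont k ε) (Vf_zero k ε)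
    ((1:ℝ),(0:ℝ)) 100 (by norm_num)
  obtain ⟨v, hv0, hvd⟩ := exists_sol_Ioo hlip (Vf_cont k ε) (Vf_zero k ε)
    ((0:ℝ),(1:ℝ)) 100 (by norm_num)
  have hε1 : |ε| ≤ 1 := le_trans hεlt.le (min_le_left _ _)
  have htrb := hCb ε hε1 u v hu0 hv0 hud hvd
  have hεC : C * |ε| < 2 - 2*c2 := by
    have h1 : |ε| < (2 - 2*c2) / (2*C) := lt_of_lt_of_le hεlt (min_le_right _ _)
    have h2 : C * |ε| < C * ((2-2*c2)/(2*C)) := mul_lt_mul_of_pos_left h1 hC0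
    have h3 : C * ((2-2*c2)/(2*C)) = (2-2*c2)/2 := by
      field_simp
    rw [h3] at h2
    linarith
  have htr : |(u (2*π)).1 + (v (2*π)).2| < 2 := by
    have h4 : |2 * Real.cos (2*π*ω)| = 2*c2 := by
      rw [abs_mul, abs_two]
    calc |(u (2*π)).1 + (v (2*π)).2|
        = |((u (2*π)).1 + (v (2*π)).2 - 2*Real.cos (2*π*ω)) + 2*Real.cos (2*π*ω)| := by
          ring_nf
    _ ≤ |(u (2*π)).1 + (v (2*π)).2 - 2*Real.cos (2*π*ω)| + |2*Real.cos (2*π*ω)| :=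
          abs_add_le _ _
    _ ≤ C*|ε| + 2*c2 := by
          rw [h4]
          exact add_le_add htrb le_rfl
    _ < 2 := by linarith
  exact hill_bounded k ε u v hu0 hv0 hud hvd htr ξ hξ1 hξ2 hode
end
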